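/- arXiv:1902.08685 — 4 statements merged into one kernel-verified Lean document; each statement's English description precedes it below -/
import Mathlib

section
/- Assume 0 < a < π/2. Let h be a classical periodic solution of the regularized Model I equation on [0,T], and fix any A > 0. Then for all 0 ≤ T₁ ≤ T₂ ≤ T, ∫_{−a}^{a} G_ε(h(x,T₂)) dx + S·( 1 − (2a/π)² )·∫_{T₁}^{T₂} ∫_{−a}^{a} h_xx² dx dt ≤ ∫_{−a}^{a} G_ε(h(x,T₁)) dx. In particular, the function T′ ↦ ∫_{−a}^{a} G_ε(h(x,T′)) dx is nonincreasing on [0,T]. -/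
open MeasureTheory intervalIntegral Real Set Filter Topology

set_option maxHeartbeats 1000000


/-- A classical periodic solution of the regularized Model I equation
`h_t = -h h_x - S ∂_x[(|h|³+ε)(h_x+h_xxx)]` on `ℝ × [0,T]`, `2a`-periodic in `x`,
with continuous partial derivatives `∂_x^j h`, `0 ≤ j ≤ 4`, and `∂_t h`. -/
structure ClassicalSolutionI (a S ε T : ℝ) (h hx hxx hxxx hxxxx ht : ℝ → ℝ → ℝ) : Prop where
  periodic_x : ∀ x t, h (x + 2 * a) t = h x t
  cont_h : ContinuousOn (fun p : ℝ × ℝ => h p.1 p.2) (Set.univ ×ˢ Set.Icc 0 T)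
  cont_hx : ContinuousOn (fun p : ℝ × ℝ => hx p.1 p.2) (Set.univ ×ˢ Set.Icc 0 T)
  cont_hxx : ContinuousOn (fun p : ℝ × ℝ => hxx p.1 p.2) (Set.univ ×ˢ Set.Icc 0 T)
  cont_hxxx : ContinuousOn (fun p : ℝ × ℝ => hxxx p.1 p.2) (Set.univ ×ˢ Set.Icc 0 T)
  cont_hxxxx : ContinuousOn (fun p : ℝ × ℝ => hxxxx p.1 p.2) (Set.univ ×ˢ Set.Icc 0 T)
  cont_ht : ContinuousOn (fun p : ℝ × ℝ => ht p.1 p.2) (Set.univ ×ˢ Set.Icc 0 T)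
  deriv_hx : ∀ x : ℝ, ∀ t ∈ Set.Icc (0:ℝ) T, HasDerivAt (fun y => h y t) (hx x t) x
  deriv_hxx : ∀ x : ℝ, ∀ t ∈ Set.Icc (0:ℝ) T, HasDerivAt (fun y => hx y t) (hxx x t) x
  deriv_hxxx : ∀ x : ℝ, ∀ t ∈ Set.Icc (0:ℝ) T, HasDerivAt (fun y => hxx y t) (hxxx x t) x
  deriv_hxxxx : ∀ x : ℝ, ∀ t ∈ Set.Icc (0:ℝ) T, HasDerivAt (fun y => hxxx y t) (hxxxx x t) x
  deriv_ht : ∀ x : ℝ, ∀ t ∈ Set.Icc (0:ℝ) T,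
    HasDerivWithinAt (fun s => h x s) (ht x t) (Set.Icc 0 T) t
  /-- The PDE `h_t = -h h_x - S ∂_x[(|h|³+ε)(h_x+h_xxx)]`, stated as: the flux
  `S (|h|³+ε)(h_x+h_xxx)` has spatial derivative `-h_t - h h_x`. -/
  pde : ∀ x : ℝ, ∀ t ∈ Set.Icc (0:ℝ) T,
    HasDerivAt (fun y => S * ((|h y t| ^ 3 + ε) * (hx y t + hxxx y t)))
      (-(ht x t) - h x t * hx x t) x

/-- `g_ε(s) = -∫_s^A dr / (|r|³ + ε)`. -/
noncomputable def gEps (A ε s : ℝ) : ℝ := -∫ r in s..A, 1 / (|r| ^ 3 + ε)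

/-- `G_ε(s) = -∫_s^A g_ε(r) dr`. -/
noncomputable def GEps (A ε s : ℝ) : ℝ := -∫ r in s..A, gEps A ε r

lemma periodic_deriv {g g' : ℝ → ℝ} {p : ℝ} (hg : ∀ x, g (x + p) = g x)
    (hd : ∀ x, HasDerivAt g (g' x) x) : ∀ x, g' (x + p) = g' x := by
  intro x
  have h1 : HasDerivAt (fun y => g (y + p)) (g' (x + p)) x := by
    have := (hd (x + p)).comp x ((hasDerivAt_id x).add_const p)
    simpa [Function.comp_def] using this
  have h2 : (fun y : ℝ => g (y + p)) = g := funext hg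
  rw [h2] at h1
  exact h1.unique (hd x)
lemma contPhi {ε : ℝ} (hε : 0 < ε) : Continuous (fun r : ℝ => 1 / (|r| ^ 3 + ε)) := by
  apply Continuous.div continuous_const
  · exact ((continuous_abs.pow 3).add continuous_const)
  · intro x
    positivity

lemma hasDerivAt_gEps (A : ℝ) {ε : ℝ} (hε : 0 < ε) (s : ℝ) :
    HasDerivAt (gEps A ε) (1 / (|s| ^ 3 + ε)) s := by
  have hc := contPhi hε
  have h1 : ∀ u, gEps A ε u = ∫ r in A..u, 1 / (|r| ^ 3 + ε) := by
    intro u; rw [gEps, intervalIntegral.integral_symm]; ring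
  have h2 : HasDerivAt (fun u => ∫ r in A..u, 1 / (|r| ^ 3 + ε)) (1 / (|s| ^ 3 + ε)) s :=
    intervalIntegral.integral_hasDerivAt_right (hc.intervalIntegrable _ _)
      (hc.stronglyMeasurableAtFilter _ _) hc.continuousAt
  exact h2.congr_of_eventuallyEq (Filter.Eventually.of_forall fun u => (h1 u))

lemma continuous_gEps (A : ℝ) {ε : ℝ} (hε : 0 < ε) : Continuous (gEps A ε) :=
  continuous_iff_continuousAt.2 fun s => (hasDerivAt_gEps A hε s).continuousAt

lemma hasDerivAt_GEps (A : ℝ) {ε : ℝ} (hε : 0 < ε) (s : ℝ) :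
    HasDerivAt (GEps A ε) (gEps A ε s) s := by
  have hc := continuous_gEps A hε
  have h1 : ∀ u, GEps A ε u = ∫ r in A..u, gEps A ε r := by
    intro u; rw [GEps, intervalIntegral.integral_symm]; ring
  have h2 : HasDerivAt (fun u => ∫ r in A..u, gEps A ε r) (gEps A ε s) s :=
    intervalIntegral.integral_hasDerivAt_right (hc.intervalIntegrable _ _)
      (hc.stronglyMeasurableAtFilter _ _) hc.continuousAt
  exact h2.congr_of_eventuallyEq (Filter.Eventually.of_forall fun u => (h1 u))

lemma continuous_GEps (A : ℝ) {ε : ℝ} (hε : 0 < ε) : Continuous (GEps A ε) :=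
  continuous_iff_continuousAt.2 fun s => (hasDerivAt_GEps A hε s).continuousAt
lemma cot_le_inv {y : ℝ} (h0 : 0 < y) (h2 : y < Real.pi / 2) :
    Real.cos y / Real.sin y ≤ 1 / y := by
  have hs : 0 < Real.sin y :=
    Real.sin_pos_of_pos_of_lt_pi h0 (h2.trans_le (by linarith [Real.pi_pos]))
  have hcos : 0 < Real.cos y := Real.cos_pos_of_mem_Ioo ⟨by linarith, h2⟩
  have ht := Real.lt_tan h0 h2
  rw [Real.tan_eq_sin_div_cos] at ht
  rw [div_le_div_iff₀ hs h0]
  have := (lt_div_iff₀ hcos).mp ht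
  nlinarith

lemma wirtinger {u u' : ℝ → ℝ} {α β : ℝ} (hαβ : α < β)
    (hd : ∀ x, HasDerivAt u (u' x) x) (hc : Continuous u')
    (h0 : u α = 0) (h1 : u β = 0) :
    ∫ x in α..β, (u x)^2 ≤ ((β - α) / Real.pi)^2 * ∫ x in α..β, (u' x)^2 := by
  have hu : Continuous u := continuous_iff_continuousAt.2 fun x => (hd x).continuousAt
  have hπ := Real.pi_pos
  have hℓ : 0 < β - α := by linarith
  set c : ℝ := Real.pi / (β - α) with hcdef
  have hcpos : 0 < c := div_pos hπ hℓ
  have hcℓ : c * (β - α) = Real.pi := by rw [hcdef]; field_simp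
  obtain ⟨M, hM⟩ := isCompact_Icc.exists_bound_of_continuousOn (s := Icc α β) hc.continuousOn
  have hM0 : 0 ≤ M := le_trans (norm_nonneg _) (hM α ⟨le_refl _, hαβ.le⟩)
  have hub1 : ∀ x ∈ Icc α β, |u x| ≤ M * (x - α) := by
    intro x hx
    have hfe : u x = ∫ t in α..x, u' t := by
      rw [intervalIntegral.integral_eq_sub_of_hasDerivAt
        (fun t _ => hd t) ((hc.intervalIntegrable _ _)), h0, sub_zero]
    rw [hfe, ← Real.norm_eq_abs]
    have hb := intervalIntegral.norm_integral_le_of_norm_le_const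
      (f := u') (C := M) (a := α) (b := x) ?_
    · calc ‖∫ t in α..x, u' t‖ ≤ M * |x - α| := hb
        _ = M * (x - α) := by rw [abs_of_nonneg (by linarith [hx.1])]
    · intro t ht
      rw [Set.uIoc_of_le hx.1] at ht
      exact hM t ⟨ht.1.le, ht.2.trans hx.2⟩
  have hub2 : ∀ x ∈ Icc α β, |u x| ≤ M * (β - x) := by
    intro x hx
    have hfe : u x = -∫ t in x..β, u' t := by
      rw [intervalIntegral.integral_eq_sub_of_hasDerivAt
        (fun t _ => hd t) ((hc.intervalIntegrable _ _)), h1]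
      ring
    rw [hfe, abs_neg, ← Real.norm_eq_abs]
    have hb := intervalIntegral.norm_integral_le_of_norm_le_const
      (f := u') (C := M) (a := x) (b := β) ?_
    · calc ‖∫ t in x..β, u' t‖ ≤ M * |β - x| := hb
        _ = M * (β - x) := by rw [abs_of_nonneg (by linarith [hx.2])]
    · intro t ht
      rw [Set.uIoc_of_le hx.2] at ht
      exact hM t ⟨hx.1.trans ht.1.le, ht.2⟩
  set f : ℝ → ℝ := fun x => (u' x)^2 - c^2 * (u x)^2 with hfdef
  have hfc : Continuous f := (hc.pow 2).sub (continuous_const.mul (hu.pow 2))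
  set J : ℝ → ℝ := fun δ => ∫ x in (α + δ)..(β - δ), f x with hJdef
  have hJcont : Continuous J := by
    have hF : Continuous (fun y => ∫ x in α..y, f x) :=
      intervalIntegral.continuous_primitive (fun a b => hfc.intervalIntegrable a b) α
    have heq : ∀ δ, J δ = (∫ x in α..(β - δ), f x) - ∫ x in α..(α + δ), f x := by
      intro δ
      rw [hJdef]
      exact (intervalIntegral.integral_interval_sub_left (hfc.intervalIntegrable α (β - δ))
        (hfc.intervalIntegrable α (α + δ))).symm
    rw [funext heq]
    exact (hF.comp (continuous_const.sub continuous_id)).sub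
      (hF.comp (continuous_const.add continuous_id))
  have hev : ∀ᶠ δ in 𝓝[>] (0:ℝ), -(2 * M^2 * δ) ≤ J δ := by
    filter_upwards [Ioo_mem_nhdsGT_of_mem (Set.left_mem_Ico.2 (half_pos hℓ))] with δ hδ
    obtain ⟨hδ0, hδℓ⟩ := hδ
    have hle : α + δ ≤ β - δ := by linarith
    set v : ℝ → ℝ := fun x => Real.sin (c * (x - α)) with hvdef
    set w : ℝ → ℝ := fun x => Real.cos (c * (x - α)) with hwdef
    have hsin : ∀ x ∈ Icc (α + δ) (β - δ), 0 < v x := by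
      intro x hx
      apply Real.sin_pos_of_pos_of_lt_pi
      · have : δ ≤ x - α := by linarith [hx.1]
        nlinarith
      · have hxa : x - α ≤ (β - α) - δ := by linarith [hx.2]
        calc c * (x - α) ≤ c * ((β - α) - δ) := by nlinarith
          _ < c * (β - α) := by nlinarith
          _ = Real.pi := hcℓ
    set B : ℝ → ℝ := fun x => c * (u x ^ 2 * (w x / v x)) with hBdef
    set D : ℝ → ℝ := fun x => c * (2 * u x * u' x * (w x / v x)
        + u x ^ 2 * ((-(Real.sin (c * (x - α)) * c * v x) - w x * (Real.cos (c * (x - α)) * c))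
          / v x ^ 2)) with hDdef
    have hinner : ∀ x : ℝ, HasDerivAt (fun y => c * (y - α)) c x := by
      intro x
      simpa using ((hasDerivAt_id x).sub_const α).const_mul c
    have hB : ∀ x ∈ Icc (α + δ) (β - δ), HasDerivAt B (D x) x := by
      intro x hx
      have hv : HasDerivAt v (Real.cos (c * (x - α)) * c) x :=
        (hinner x).sin
      have hw : HasDerivAt w (-Real.sin (c * (x - α)) * c) x :=
        (hinner x).cos
      have hdiv := hw.div hv (hsin x hx).ne'
      have h1 : HasDerivAt (fun y => (u y)^2) (2 * u x * u' x) x := by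
        simpa [mul_comm, mul_assoc, mul_left_comm] using (hd x).fun_pow 2
      have hB0 := (h1.mul hdiv).const_mul c
      refine hB0.congr_deriv ?_
      rw [hDdef]
      simp only [Pi.div_apply]
      ring
    have hvc : Continuous v := Real.continuous_sin.comp (by fun_prop)
    have hwc : Continuous w := Real.continuous_cos.comp (by fun_prop)
    have hDc : ContinuousOn D (Icc (α + δ) (β - δ)) := by
      apply ContinuousOn.mul continuousOn_const
      apply ContinuousOn.add
      · exact (Continuous.continuousOn (by fun_prop)).mul
          (hwc.continuousOn.div hvc.continuousOn (fun x hx => (hsin x hx).ne'))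
      · exact (Continuous.continuousOn (hu.pow 2)).mul
          ((Continuous.continuousOn (by fun_prop)).div ((hvc.pow 2).continuousOn)
            (fun x hx => (pow_pos (hsin x hx) 2).ne'))
    have hftc : ∫ x in (α + δ)..(β - δ), D x = B (β - δ) - B (α + δ) := by
      apply intervalIntegral.integral_eq_sub_of_hasDerivAt
      · intro x hx
        rw [Set.uIcc_of_le hle] at hx
        exact hB x hx
      · exact (hDc.mono (by rw [Set.uIcc_of_le hle])).intervalIntegrable
    have hptwise : ∀ x ∈ Icc (α + δ) (β - δ), D x ≤ f x := by
      intro x hx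
      have hs := hsin x hx
      have hvne : v x ≠ 0 := hs.ne'
      have key : (f x - D x) * (v x)^2 = (v x * u' x - c * u x * w x)^2 := by
        rw [hfdef, hDdef]
        have hv1 : Real.sin (c * (x - α)) = v x := rfl
        have hw1 : Real.cos (c * (x - α)) = w x := rfl
        simp only [hv1, hw1]
        field_simp
        ring
      nlinarith [sq_nonneg (v x * u' x - c * u x * w x), pow_pos hs 2, key]
    have hmain : B (β - δ) - B (α + δ) ≤ J δ := by
      rw [hJdef, ← hftc]
      exact intervalIntegral.integral_mono_on hle
        ((hDc.mono (by rw [Set.uIcc_of_le hle] : Set.uIcc (α + δ) (β - δ) ⊆ _)).intervalIntegrable)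
        (hfc.intervalIntegrable _ _) hptwise
    have hcδ0 : 0 < c * δ := mul_pos hcpos hδ0
    have hcδ2 : c * δ < Real.pi / 2 := by
      have h2 : c * δ < c * ((β - α) / 2) := by nlinarith
      have h3 : c * ((β - α) / 2) = Real.pi / 2 := by
        rw [hcdef]; field_simp
      linarith
    have hcot := cot_le_inv hcδ0 hcδ2
    have hsδ : 0 < Real.sin (c * δ) :=
      Real.sin_pos_of_pos_of_lt_pi hcδ0 (hcδ2.trans_le (by linarith))
    have hcδc : 0 < Real.cos (c * δ) := Real.cos_pos_of_mem_Ioo ⟨by linarith, hcδ2⟩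
    have hcotpos : 0 ≤ Real.cos (c * δ) / Real.sin (c * δ) := le_of_lt (div_pos hcδc hsδ)
    have hB1 : B (α + δ) ≤ M^2 * δ := by
      have harg : c * ((α + δ) - α) = c * δ := by ring_nf
      have hua : |u (α + δ)| ≤ M * δ := by
        have := hub1 (α + δ) ⟨by linarith, by linarith⟩
        simpa using this
      have huasq : (u (α + δ))^2 ≤ (M * δ)^2 := by
        rw [← sq_abs]
        exact pow_le_pow_left₀ (abs_nonneg _) hua 2
      have hBval : B (α + δ) = c * (u (α + δ))^2 * (Real.cos (c * δ) / Real.sin (c * δ)) := by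
        rw [hBdef]; simp only [hvdef, hwdef, harg]; ring
      rw [hBval]
      calc c * (u (α + δ))^2 * (Real.cos (c * δ) / Real.sin (c * δ))
          ≤ c * (M * δ)^2 * (1 / (c * δ)) := by
            apply mul_le_mul (by nlinarith) hcot hcotpos (by positivity)
        _ = M^2 * δ := by field_simp
    have hB2 : -(M^2 * δ) ≤ B (β - δ) := by
      have harg : c * ((β - δ) - α) = Real.pi - c * δ := by
        have h4 : c * ((β - δ) - α) = c * (β - α) - c * δ := by ring
        rw [h4, hcℓ]
      have hub : |u (β - δ)| ≤ M * δ := by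
        have := hub2 (β - δ) ⟨by linarith, by linarith⟩
        simpa using this
      have huasq : (u (β - δ))^2 ≤ (M * δ)^2 := by
        rw [← sq_abs]
        exact pow_le_pow_left₀ (abs_nonneg _) hub 2
      have hBval : B (β - δ) = c * (u (β - δ))^2 * (-(Real.cos (c * δ) / Real.sin (c * δ))) := by
        rw [hBdef]; simp only [hvdef, hwdef, harg, Real.cos_pi_sub, Real.sin_pi_sub]
        ring
      rw [hBval]
      have h2 : c * (u (β - δ))^2 * (Real.cos (c * δ) / Real.sin (c * δ)) ≤ M^2 * δ := by
        calc c * (u (β - δ))^2 * (Real.cos (c * δ) / Real.sin (c * δ))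
            ≤ c * (M * δ)^2 * (1 / (c * δ)) := by
              apply mul_le_mul (by nlinarith) hcot hcotpos (by positivity)
          _ = M^2 * δ := by field_simp
      linarith
    linarith
  have hkey : 0 ≤ J 0 := by
    have hJ0 : Filter.Tendsto J (𝓝[>] (0:ℝ)) (𝓝 (J 0)) :=
      (hJcont.continuousAt).continuousWithinAt
    have hlin : Filter.Tendsto (fun δ : ℝ => -(2 * M^2 * δ)) (𝓝[>] (0:ℝ)) (𝓝 0) := by
      have h5 : Continuous (fun δ : ℝ => -(2 * M^2 * δ)) := by continuity
      have h6 : Filter.Tendsto (fun δ : ℝ => -(2 * M^2 * δ)) (𝓝[>] (0:ℝ)) (𝓝 (-(2 * M^2 * 0))) :=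
        (h5.tendsto 0).mono_left nhdsWithin_le_nhds
      simpa using h6
    exact le_of_tendsto_of_tendsto hlin hJ0 hev
  have hJ0eq : J 0 = (∫ x in α..β, (u' x)^2) - c^2 * ∫ x in α..β, (u x)^2 := by
    rw [hJdef]
    simp only [add_zero, sub_zero]
    rw [hfdef]
    beta_reduce
    rw [intervalIntegral.integral_sub (f := fun x => u' x ^ 2) (g := fun x => c ^ 2 * u x ^ 2)
      ((hc.pow 2).intervalIntegrable _ _)
      ((continuous_const.mul (hu.pow 2)).intervalIntegrable _ _),
      intervalIntegral.integral_const_mul]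
  rw [hJ0eq] at hkey
  have hconst : ((β - α) / Real.pi)^2 * c^2 = 1 := by
    rw [hcdef]; field_simp
  have h5 : 0 ≤ ((β - α) / Real.pi)^2 * ((∫ x in α..β, (u' x)^2) - c^2 * ∫ x in α..β, (u x)^2) :=
    mul_nonneg (sq_nonneg _) hkey
  have h7 : ((β - α) / Real.pi)^2 * ((∫ x in α..β, (u' x)^2) - c^2 * ∫ x in α..β, (u x)^2)
      = ((β - α) / Real.pi)^2 * (∫ x in α..β, (u' x)^2) - (∫ x in α..β, (u x)^2) := by
    linear_combination (-(∫ x in α..β, (u x)^2)) * hconst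
  linarith [h5, h7]


/-- Entropy dissipation for regularized Model I when `a < π/2`: for `0 ≤ T₁ ≤ T₂ ≤ T`,
`∫ G_ε(h(·,T₂)) + S(1-(2a/π)²)∫_{T₁}^{T₂}∫ h_xx² ≤ ∫ G_ε(h(·,T₁))`; in particular
`T' ↦ ∫ G_ε(h(·,T'))` is nonincreasing on `[0,T]`. -/
theorem modelI_entropy_decreasing
    (a S ε T A : ℝ) (ha : 0 < a) (ha2 : a < Real.pi / 2) (hS : 0 < S) (hε : 0 < ε)
    (hT : 0 < T) (hA : 0 < A)
    (h hx hxx hxxx hxxxx ht : ℝ → ℝ → ℝ)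
    (hsol : ClassicalSolutionI a S ε T h hx hxx hxxx hxxxx ht) :
    (∀ T₁ T₂ : ℝ, 0 ≤ T₁ → T₁ ≤ T₂ → T₂ ≤ T →
      (∫ x in (-a)..a, GEps A ε (h x T₂))
        + S * (1 - (2 * a / Real.pi)^2) * ∫ t in T₁..T₂, ∫ x in (-a)..a, (hxx x t)^2
      ≤ ∫ x in (-a)..a, GEps A ε (h x T₁)) ∧
    AntitoneOn (fun T' => ∫ x in (-a)..a, GEps A ε (h x T')) (Set.Icc 0 T) := by
  obtain ⟨hper, ch, chx, chxx, chxxx, chxxxx, cht, dhx, dhxx, dhxxx, dhxxxx, dht, hpde⟩ := hsol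
  have hπ := Real.pi_pos
  have hg := continuous_gEps A hε
  have hG := continuous_GEps A hε
  -- continuity of x-sections at fixed time
  have sect : ∀ {g : ℝ → ℝ → ℝ}, ContinuousOn (fun p : ℝ × ℝ => g p.1 p.2)
      (Set.univ ×ˢ Set.Icc 0 T) → ∀ t ∈ Set.Icc (0:ℝ) T, Continuous (fun x => g x t) := by
    intro g hgc t htm
    have := hgc.comp_continuous (continuous_id.prodMk continuous_const)
      (fun x => ⟨trivial, htm⟩)
    simpa [Function.comp_def] using this
  -- continuity of t-sections at fixed x
  have sectT : ∀ {g : ℝ → ℝ → ℝ}, ContinuousOn (fun p : ℝ × ℝ => g p.1 p.2)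
      (Set.univ ×ˢ Set.Icc 0 T) → ∀ x : ℝ, ContinuousOn (fun s => g x s) (Set.Icc 0 T) := by
    intro g hgc x
    have hmap : ContinuousOn (fun s : ℝ => ((x, s) : ℝ × ℝ)) (Set.Icc 0 T) :=
      Continuous.continuousOn (by fun_prop)
    have := hgc.comp hmap (fun s hs => ⟨trivial, hs⟩)
    simpa [Function.comp_def] using this
  -- periodicity of derivatives
  have per_hx : ∀ t ∈ Set.Icc (0:ℝ) T, ∀ x, hx (x + 2*a) t = hx x t := by
    intro t htm
    exact periodic_deriv (fun x => hper x t) (fun x => dhx x t htm)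
  have per_hxx : ∀ t ∈ Set.Icc (0:ℝ) T, ∀ x, hxx (x + 2*a) t = hxx x t := by
    intro t htm
    exact periodic_deriv (per_hx t htm) (fun x => dhxx x t htm)
  have per_hxxx : ∀ t ∈ Set.Icc (0:ℝ) T, ∀ x, hxxx (x + 2*a) t = hxxx x t := by
    intro t htm
    exact periodic_deriv (per_hxx t htm) (fun x => dhxxx x t htm)
  have hneg : (-a) + 2*a = a := by ring
  -- core spatial identity
  have core : ∀ t ∈ Set.Icc (0:ℝ) T,
      ∫ x in (-a)..a, gEps A ε (h x t) * ht x t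
        = S * (∫ x in (-a)..a, (hx x t)^2) - S * ∫ x in (-a)..a, (hxx x t)^2 := by
    intro t htm
    have chs : Continuous (fun x => h x t) := sect ch t htm
    have chxs : Continuous (fun x => hx x t) := sect chx t htm
    have chxxs : Continuous (fun x => hxx x t) := sect chxx t htm
    have chxxxs : Continuous (fun x => hxxx x t) := sect chxxx t htm
    have chts : Continuous (fun x => ht x t) := sect cht t htm
    have e_h : h a t = h (-a) t := by have := hper (-a) t; rwa [hneg] at this
    have e_hx : hx a t = hx (-a) t := by have := per_hx t htm (-a); rwa [hneg] at this
    have e_hxx : hxx a t = hxx (-a) t := by have := per_hxx t htm (-a); rwa [hneg] at this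
    have e_hxxx : hxxx a t = hxxx (-a) t := by have := per_hxxx t htm (-a); rwa [hneg] at this
    set P : ℝ → ℝ := fun y => S * ((|h y t| ^ 3 + ε) * (hx y t + hxxx y t)) with hPdef
    have cΦi : Continuous (fun q : ℝ => gEps A ε q * q) := hg.mul continuous_id
    have hΦd : ∀ s : ℝ, HasDerivAt (fun r => ∫ q in (0:ℝ)..r, gEps A ε q * q)
        (gEps A ε s * s) s := fun s =>
      intervalIntegral.integral_hasDerivAt_right (cΦi.intervalIntegrable _ _)
        (cΦi.stronglyMeasurableAtFilter _ _) cΦi.continuousAt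
    set Φ : ℝ → ℝ := fun s => ∫ q in (0:ℝ)..s, gEps A ε q * q with hΦdef
    set K : ℝ → ℝ := fun y => -Φ (h y t) - gEps A ε (h y t) * P y
      + S * (hx y t * hxx y t) with hKdef
    have hK : ∀ x : ℝ, HasDerivAt K
        (gEps A ε (h x t) * ht x t + S * (hxx x t)^2 - S * (hx x t)^2) x := by
      intro x
      have hpos : (0:ℝ) < |h x t| ^ 3 + ε := by positivity
      have h1 : HasDerivAt (fun y => Φ (h y t)) (gEps A ε (h x t) * h x t * hx x t) x := by
        have := (hΦd (h x t)).comp x (dhx x t htm)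
        simpa [Function.comp_def] using this
      have h2 : HasDerivAt (fun y => gEps A ε (h y t)) (1 / (|h x t| ^ 3 + ε) * hx x t) x := by
        have := (hasDerivAt_gEps A hε (h x t)).comp x (dhx x t htm)
        simpa [Function.comp_def] using this
      have h3 : HasDerivAt P (-(ht x t) - h x t * hx x t) x := hpde x t htm
      have h4 := h2.mul h3
      have h5 : HasDerivAt (fun y => hx y t * hxx y t)
          (hxx x t * hxx x t + hx x t * hxxx x t) x := (dhxx x t htm).mul (dhxxx x t htm)
      have h6 := (h1.neg.sub h4).add (h5.const_mul S)
      refine h6.congr_deriv ?_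
      simp only [hPdef]
      field_simp
      ring
    have hKint : ∫ x in (-a)..a,
        (gEps A ε (h x t) * ht x t + S * (hxx x t)^2 - S * (hx x t)^2) = K a - K (-a) := by
      apply intervalIntegral.integral_eq_sub_of_hasDerivAt (fun x _ => hK x)
      apply Continuous.intervalIntegrable
      exact (((hg.comp chs).mul chts).add (continuous_const.mul (chxxs.pow 2))).sub
        (continuous_const.mul (chxs.pow 2))
    have hKper : K a = K (-a) := by
      simp only [hKdef, hPdef]
      rw [e_h, e_hx, e_hxx, e_hxxx]
    have i1 : IntervalIntegrable (fun x => gEps A ε (h x t) * ht x t) volume (-a) a :=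
      ((hg.comp chs).mul chts).intervalIntegrable _ _
    have i2 : IntervalIntegrable (fun x => S * (hxx x t)^2) volume (-a) a :=
      (continuous_const.mul (chxxs.pow 2)).intervalIntegrable _ _
    have i3 : IntervalIntegrable (fun x => S * (hx x t)^2) volume (-a) a :=
      (continuous_const.mul (chxs.pow 2)).intervalIntegrable _ _
    have hsplit : (∫ x in (-a)..a, gEps A ε (h x t) * ht x t)
        + (∫ x in (-a)..a, S * (hxx x t)^2) - (∫ x in (-a)..a, S * (hx x t)^2)
        = K a - K (-a) := by
      rw [← intervalIntegral.integral_add i1 i2, ← intervalIntegral.integral_sub (i1.add i2) i3]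
      exact hKint
    rw [intervalIntegral.integral_const_mul, intervalIntegral.integral_const_mul] at hsplit
    have hzero : K a - K (-a) = 0 := by rw [hKper]; ring
    rw [hzero] at hsplit
    linarith
  -- Wirtinger step
  have wirt : ∀ t ∈ Set.Icc (0:ℝ) T,
      ∫ x in (-a)..a, (hx x t)^2 ≤ (2*a/Real.pi)^2 * ∫ x in (-a)..a, (hxx x t)^2 := by
    intro t htm
    have chs : Continuous (fun x => h x t) := sect ch t htm
    have chxs : Continuous (fun x => hx x t) := sect chx t htm
    have chxxs : Continuous (fun x => hxx x t) := sect chxx t htm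
    have e_h : h (-a) t = h a t := by have := hper (-a) t; rw [hneg] at this; exact this.symm
    obtain ⟨x₀, hx₀mem, hx₀⟩ := exists_hasDerivAt_eq_zero (by linarith : -a < a)
      chs.continuousOn e_h (fun x _ => dhx x t htm)
    have hend : hx (x₀ + 2*a) t = 0 := by rw [per_hx t htm x₀]; exact hx₀
    have hw := wirtinger (u := fun y => hx y t) (u' := fun y => hxx y t)
      (by linarith : x₀ < x₀ + 2*a) (fun x => dhxx x t htm) chxxs hx₀ hend
    have p1 : Function.Periodic (fun y => (hx y t)^2) (2*a) := by
      intro x; dsimp only; rw [per_hx t htm x]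
    have p2 : Function.Periodic (fun y => (hxx y t)^2) (2*a) := by
      intro x; dsimp only; rw [per_hxx t htm x]
    have t1 : ∫ x in x₀..(x₀ + 2*a), (hx x t)^2 = ∫ x in (-a)..a, (hx x t)^2 := by
      have := p1.intervalIntegral_add_eq x₀ (-a)
      rwa [hneg] at this
    have t2 : ∫ x in x₀..(x₀ + 2*a), (hxx x t)^2 = ∫ x in (-a)..a, (hxx x t)^2 := by
      have := p2.intervalIntegral_add_eq x₀ (-a)
      rwa [hneg] at this
    have harg : x₀ + 2*a - x₀ = 2*a := by ring
    rw [t1, t2, harg] at hw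
    exact hw
  -- time FTC at fixed x
  have tftc : ∀ T₁ T₂ : ℝ, 0 ≤ T₁ → T₁ ≤ T₂ → T₂ ≤ T → ∀ x : ℝ,
      GEps A ε (h x T₂) - GEps A ε (h x T₁)
        = ∫ t in T₁..T₂, gEps A ε (h x t) * ht x t := by
    intro T₁ T₂ h01 h12 h2T x
    have hsub : Set.Icc T₁ T₂ ⊆ Set.Icc (0:ℝ) T := Set.Icc_subset_Icc h01 h2T
    have hcx : ContinuousOn (fun s => h x s) (Set.Icc 0 T) := sectT ch x
    have hctx : ContinuousOn (fun s => ht x s) (Set.Icc 0 T) := sectT cht x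
    have hconts : ContinuousOn (fun s => GEps A ε (h x s)) (Set.Icc T₁ T₂) :=
      hG.comp_continuousOn (hcx.mono hsub)
    have hderiv : ∀ t' ∈ Set.Ioo T₁ T₂, HasDerivWithinAt (fun s => GEps A ε (h x s))
        (gEps A ε (h x t') * ht x t') (Set.Ioi t') t' := by
      intro t' ht'
      have htm' : t' ∈ Set.Icc (0:ℝ) T := hsub ⟨ht'.1.le, ht'.2.le⟩
      have h1 : HasDerivWithinAt (fun s => GEps A ε (h x s))
          (gEps A ε (h x t') * ht x t') (Set.Icc 0 T) t' :=
        (hasDerivAt_GEps A hε (h x t')).comp_hasDerivWithinAt t' (dht x t' htm')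
      apply h1.mono_of_mem_nhdsWithin
      apply Filter.mem_of_superset (Ioc_mem_nhdsGT (lt_of_lt_of_le ht'.2 h2T))
      intro s hs
      exact ⟨(h01.trans ht'.1.le).trans hs.1.le, hs.2⟩
    have hint : IntervalIntegrable (fun t' => gEps A ε (h x t') * ht x t') volume T₁ T₂ := by
      apply ContinuousOn.intervalIntegrable
      rw [Set.uIcc_of_le h12]
      exact ((hg.comp_continuousOn (hcx.mono hsub)).mul (hctx.mono hsub))
    exact (intervalIntegral.integral_eq_sub_of_hasDeriv_right_of_le h12 hconts hderiv hint).symm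
  -- part 1
  have part1 : ∀ T₁ T₂ : ℝ, 0 ≤ T₁ → T₁ ≤ T₂ → T₂ ≤ T →
      (∫ x in (-a)..a, GEps A ε (h x T₂))
        + S * (1 - (2 * a / Real.pi)^2) * ∫ t in T₁..T₂, ∫ x in (-a)..a, (hxx x t)^2
      ≤ ∫ x in (-a)..a, GEps A ε (h x T₁) := by
    intro T₁ T₂ h01 h12 h2T
    have ha2 : -a ≤ a := by linarith
    have hsub : Set.Icc T₁ T₂ ⊆ Set.Icc (0:ℝ) T := Set.Icc_subset_Icc h01 h2T
    have hT1m : T₁ ∈ Set.Icc (0:ℝ) T := ⟨h01, h12.trans h2T⟩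
    have hT2m : T₂ ∈ Set.Icc (0:ℝ) T := ⟨h01.trans h12, h2T⟩
    -- clamped time for parametric continuity
    set cl : ℝ → ℝ := fun s => max 0 (min T s) with hcldef
    have hclmem : ∀ s, cl s ∈ Set.Icc (0:ℝ) T :=
      fun s => ⟨le_max_left _ _, max_le hT.le (min_le_left _ _)⟩
    have hclc : Continuous cl := continuous_const.max (continuous_const.min continuous_id)
    have hcleq : ∀ s ∈ Set.Icc (0:ℝ) T, cl s = s := by
      intro s hs
      rw [hcldef]
      simp only
      rw [min_eq_right hs.2, max_eq_right hs.1]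
    have contJ : ∀ (g : ℝ → ℝ → ℝ), ContinuousOn (fun p : ℝ × ℝ => g p.1 p.2)
        (Set.univ ×ˢ Set.Icc 0 T) →
        Continuous (fun s => ∫ x in (-a)..a, (g x (cl s))^2) := by
      intro g hgc
      apply intervalIntegral.continuous_parametric_intervalIntegral_of_continuous'
      have : Continuous (fun p : ℝ × ℝ => g p.2 (cl p.1)) := by
        have := hgc.comp_continuous
          ((continuous_snd).prodMk (hclc.comp continuous_fst))
          (fun p => ⟨trivial, hclmem p.1⟩)
        simpa [Function.comp_def] using this
      exact this.pow 2
    have hJ1int : IntervalIntegrable (fun t' => ∫ x in (-a)..a, (hx x t')^2) volume T₁ T₂ := by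
      apply ContinuousOn.intervalIntegrable
      rw [Set.uIcc_of_le h12]
      apply ContinuousOn.congr (((contJ hx chx).continuousOn).mono (Set.subset_univ _))
      intro s hs
      dsimp only
      rw [hcleq s (hsub hs)]
    have hJ2int : IntervalIntegrable (fun t' => ∫ x in (-a)..a, (hxx x t')^2) volume T₁ T₂ := by
      apply ContinuousOn.intervalIntegrable
      rw [Set.uIcc_of_le h12]
      apply ContinuousOn.congr (((contJ hxx chxx).continuousOn).mono (Set.subset_univ _))
      intro s hs
      dsimp only
      rw [hcleq s (hsub hs)]
    -- difference of entropies as a time integral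
    have int1 : IntervalIntegrable (fun x => GEps A ε (h x T₂)) volume (-a) a :=
      (hG.comp (sect ch T₂ hT2m)).intervalIntegrable _ _
    have int2 : IntervalIntegrable (fun x => GEps A ε (h x T₁)) volume (-a) a :=
      (hG.comp (sect ch T₁ hT1m)).intervalIntegrable _ _
    have hFT : (∫ x in (-a)..a, GEps A ε (h x T₂)) - (∫ x in (-a)..a, GEps A ε (h x T₁))
        = ∫ t' in T₁..T₂, (S * (∫ x in (-a)..a, (hx x t')^2)
            - S * ∫ x in (-a)..a, (hxx x t')^2) := by
      rw [← intervalIntegral.integral_sub int1 int2]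
      rw [intervalIntegral.integral_congr
        (g := fun x => ∫ t' in T₁..T₂, gEps A ε (h x t') * ht x t')
        (fun x _ => tftc T₁ T₂ h01 h12 h2T x)]
      rw [intervalIntegral.integral_of_le ha2, intervalIntegral.integral_of_le h12]
      have hinner : ∀ x : ℝ, (∫ t' in T₁..T₂, gEps A ε (h x t') * ht x t')
          = ∫ t' in Set.Ioc T₁ T₂, gEps A ε (h x t') * ht x t' :=
        fun x => intervalIntegral.integral_of_le h12
      simp only [hinner]
      have hsubP : (Set.Icc (-a) a ×ˢ Set.Icc T₁ T₂) ⊆ (Set.univ ×ˢ Set.Icc (0:ℝ) T) :=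
        Set.prod_mono (Set.subset_univ _) hsub
      have hcont2 : ContinuousOn (fun p : ℝ × ℝ => gEps A ε (h p.1 p.2) * ht p.1 p.2)
          (Set.Icc (-a) a ×ˢ Set.Icc T₁ T₂) :=
        (hg.comp_continuousOn (ch.mono hsubP)).mul (cht.mono hsubP)
      have hI : Integrable (Function.uncurry fun x t' => gEps A ε (h x t') * ht x t')
          ((volume.restrict (Set.Ioc (-a) a)).prod (volume.restrict (Set.Ioc T₁ T₂))) := by
        rw [Measure.prod_restrict]
        have hIO : IntegrableOn (fun p : ℝ × ℝ => gEps A ε (h p.1 p.2) * ht p.1 p.2)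
            (Set.Icc (-a) a ×ˢ Set.Icc T₁ T₂) (volume.prod volume) :=
          hcont2.integrableOn_compact (isCompact_Icc.prod isCompact_Icc)
        exact hIO.mono_set (Set.prod_mono Set.Ioc_subset_Icc_self Set.Ioc_subset_Icc_self)
      have hswap := MeasureTheory.integral_integral_swap hI
      rw [hswap]
      apply MeasureTheory.setIntegral_congr_fun measurableSet_Ioc
      intro t' ht'
      have htm' : t' ∈ Set.Icc (0:ℝ) T := ⟨h01.trans ht'.1.le, ht'.2.trans h2T⟩
      dsimp only
      rw [← intervalIntegral.integral_of_le ha2]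
      exact core t' htm'
    -- pointwise comparison and conclusion
    have hWle : ∫ t' in T₁..T₂, (S * (∫ x in (-a)..a, (hx x t')^2)
            - S * ∫ x in (-a)..a, (hxx x t')^2)
        ≤ ∫ t' in T₁..T₂, ((S * (2*a/Real.pi)^2 - S) * ∫ x in (-a)..a, (hxx x t')^2) := by
      apply intervalIntegral.integral_mono_on h12
      · exact ((hJ1int.const_mul S).sub (hJ2int.const_mul S))
      · exact hJ2int.const_mul _
      · intro t' ht'
        have hW := wirt t' (hsub ht')
        nlinarith [hW, hS]
    rw [intervalIntegral.integral_const_mul] at hWle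
    have hgoal : S * (1 - (2 * a / Real.pi)^2)
        * ∫ t in T₁..T₂, ∫ x in (-a)..a, (hxx x t)^2
        = -((S * (2*a/Real.pi)^2 - S) * ∫ t' in T₁..T₂, ∫ x in (-a)..a, (hxx x t')^2) := by
      ring
    linarith [hWle, hFT]
  refine ⟨part1, ?_⟩
  intro t₁ ht₁ t₂ ht₂ h12
  have hp := part1 t₁ t₂ ht₁.1 h12 ht₂.2
  have hfrac : (2*a/Real.pi)^2 < 1 := by
    have h1 : 2*a/Real.pi < 1 := by rw [div_lt_one hπ]; linarith
    have h0 : 0 < 2*a/Real.pi := div_pos (by linarith) hπ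
    nlinarith
  have hpos : 0 ≤ S * (1 - (2*a/Real.pi)^2) * ∫ t in t₁..t₂, ∫ x in (-a)..a, (hxx x t)^2 := by
    apply mul_nonneg (mul_nonneg hS.le (by linarith))
    apply intervalIntegral.integral_nonneg h12
    intro t _
    apply intervalIntegral.integral_nonneg (by linarith)
    intro x _
    exact sq_nonneg _
  simp only
  linarith
end

section
/- Let a > 0, Ω = (−a,a), T̂ > 0, and A > 0. Let (ε_k) be a sequence of positive numbers with ε_k → 0, and let h_k : [−a,a] × [0,T̂] → ℝ be continuous functions with |h_k| ≤ A for all k, converging uniformly on [−a,a] × [0,T̂] to a function h. Suppose there is B < ∞ with ∫_{−a}^{a} G_{ε_k}(h_k(x,t)) dx ≤ B for all k and all t ∈ [0,T̂]. Then h(x,t) ≥ 0 for all (x,t) ∈ [−a,a] × [0,T̂], and for every t ∈ [0,T̂] the set { x ∈ (−a,a) : h(x,t) = 0 } has Lebesgue measure zero. -/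
open MeasureTheory intervalIntegral Set

variable {A ε : ℝ}

lemma fcont (hε : 0 < ε) : Continuous fun r : ℝ => 1 / (|r| ^ 3 + ε) := by
  apply Continuous.div continuous_const ((continuous_abs.pow 3).add continuous_const)
  intro r; exact (show (0:ℝ) < |r| ^ 3 + ε by positivity).ne'

lemma fpos (hε : 0 < ε) (r : ℝ) : 0 < 1 / (|r| ^ 3 + ε) := by positivity

lemma fintble (hε : 0 < ε) (u v : ℝ) :
    IntervalIntegrable (fun r : ℝ => 1 / (|r| ^ 3 + ε)) MeasureTheory.volume u v :=
  (fcont hε).intervalIntegrable u v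

lemma gcont (hε : 0 < ε) : Continuous (gEps A ε) := by
  have : (gEps A ε) = fun s => ∫ r in A..s, 1 / (|r| ^ 3 + ε) := by
    funext s; rw [gEps, ← intervalIntegral.integral_symm]
  rw [this]
  exact intervalIntegral.continuous_primitive (fun a b => fintble hε a b) A

lemma gnonpos (hε : 0 < ε) {r : ℝ} (hr : r ≤ A) : gEps A ε r ≤ 0 := by
  rw [gEps, neg_nonpos]
  exact intervalIntegral.integral_nonneg hr (fun u _ => (fpos hε u).le)

lemma gintble (hε : 0 < ε) (u v : ℝ) :
    IntervalIntegrable (gEps A ε) MeasureTheory.volume u v :=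
  (gcont hε).intervalIntegrable u v

lemma GEps_eq (s : ℝ) : GEps A ε s = ∫ r in s..A, -(gEps A ε r) := by
  rw [GEps, intervalIntegral.integral_neg]

lemma Gmono (hε : 0 < ε) {s δ : ℝ} (hsδ : s ≤ δ) (hδA : δ ≤ A) :
    GEps A ε δ ≤ GEps A ε s := by
  rw [GEps_eq, GEps_eq]
  have hsplit : (∫ r in s..δ, -(gEps A ε r)) + ∫ r in δ..A, -(gEps A ε r)
      = ∫ r in s..A, -(gEps A ε r) :=
    intervalIntegral.integral_add_adjacent_intervals
      ((gcont hε).neg.intervalIntegrable _ _) ((gcont hε).neg.intervalIntegrable _ _)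
  have h1 : 0 ≤ ∫ r in s..δ, -(gEps A ε r) :=
    intervalIntegral.integral_nonneg hsδ
      (fun u hu => neg_nonneg.2 (gnonpos hε (hu.2.trans hδA)))
  linarith

lemma Gnonneg (hε : 0 < ε) {s : ℝ} (hs : s ≤ A) : 0 ≤ GEps A ε s := by
  have : GEps A ε A = 0 := by
    rw [GEps, intervalIntegral.integral_same, neg_zero]
  have := Gmono hε hs (le_refl A)
  linarith [Gmono (A := A) hε hs (le_refl A),
    (show GEps A ε A = 0 by rw [GEps, intervalIntegral.integral_same, neg_zero])]

lemma Gcont (hε : 0 < ε) : Continuous (GEps A ε) := by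
  have : (GEps A ε) = fun s => ∫ r in A..s, gEps A ε r := by
    funext s; rw [GEps, ← intervalIntegral.integral_symm]
  rw [this]
  exact intervalIntegral.continuous_primitive
    (fun a b => (gcont hε).intervalIntegrable a b) A

lemma neg_g_lb (hε : 0 < ε) {δ r : ℝ} (hδ : 0 < δ) (hδr : δ ≤ r) (hrA : 2 * r ≤ A)
    (hεδ : ε ≤ δ ^ 3) : 1 / (9 * r ^ 2) ≤ -(gEps A ε r) := by
  have hr : 0 < r := hδ.trans_le hδr
  rw [gEps, neg_neg]
  have hsplit : (∫ u in r..2*r, 1 / (|u| ^ 3 + ε)) + ∫ u in 2*r..A, 1 / (|u| ^ 3 + ε)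
      = ∫ u in r..A, 1 / (|u| ^ 3 + ε) :=
    intervalIntegral.integral_add_adjacent_intervals
      ((fcont hε).intervalIntegrable _ _) ((fcont hε).intervalIntegrable _ _)
  have h2 : 0 ≤ ∫ u in 2*r..A, 1 / (|u| ^ 3 + ε) :=
    intervalIntegral.integral_nonneg hrA (fun u _ => (fpos hε u).le)
  have h1 : (∫ u in r..2*r, (1 / (9 * r ^ 3) : ℝ)) ≤ ∫ u in r..2*r, 1 / (|u| ^ 3 + ε) := by
    apply intervalIntegral.integral_mono_on (by linarith)
      (intervalIntegrable_const) ((fcont hε).intervalIntegrable _ _)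
    intro u hu
    have hu1 : r ≤ u := hu.1
    have hu2 : u ≤ 2 * r := hu.2
    have habs : |u| = u := abs_of_pos (hr.trans_le hu1)
    have hd : |u| ^ 3 + ε ≤ 9 * r ^ 3 := by
      rw [habs]
      have hu3 : u ^ 3 ≤ 8 * r ^ 3 := by
        have := pow_le_pow_left₀ (by linarith : (0:ℝ) ≤ u) hu2 3
        nlinarith [this]
      have : ε ≤ r ^ 3 := hεδ.trans (pow_le_pow_left₀ hδ.le hδr 3)
      nlinarith
    have hpos : (0:ℝ) < |u| ^ 3 + ε := by positivity
    exact one_div_le_one_div_of_le hpos hd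
  have hc : (∫ u in r..2*r, (1 / (9 * r ^ 3) : ℝ)) = 1 / (9 * r ^ 2) := by
    rw [intervalIntegral.integral_const, smul_eq_mul]
    field_simp
    ring
  linarith

lemma Gblow (hε : 0 < ε) {δ : ℝ} (hδ : 0 < δ) (h2δ : 2 * δ ≤ A) (hεδ : ε ≤ δ ^ 3) :
    (1 / δ - 2 / A) / 9 ≤ GEps A ε δ := by
  have hA : 0 < A := by linarith
  have hδA2 : δ ≤ A / 2 := by linarith
  rw [show GEps A ε δ = ∫ r in δ..A, -(gEps A ε r) by rw [GEps, intervalIntegral.integral_neg]]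
  have hsplit : (∫ r in δ..(A/2), -(gEps A ε r)) + ∫ r in (A/2)..A, -(gEps A ε r)
      = ∫ r in δ..A, -(gEps A ε r) :=
    intervalIntegral.integral_add_adjacent_intervals
      ((gcont hε).neg.intervalIntegrable _ _) ((gcont hε).neg.intervalIntegrable _ _)
  have h2 : 0 ≤ ∫ r in (A/2)..A, -(gEps A ε r) := by
    apply intervalIntegral.integral_nonneg (by linarith)
    intro u hu
    rw [neg_nonneg, gEps, neg_nonpos]
    exact intervalIntegral.integral_nonneg hu.2 (fun v _ => (fpos hε v).le)
  have h1 : (∫ r in δ..(A/2), 1 / (9 * r ^ 2)) ≤ ∫ r in δ..(A/2), -(gEps A ε r) := by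
    apply intervalIntegral.integral_mono_on hδA2 _ ((gcont hε).neg.intervalIntegrable _ _)
    · intro r hr
      exact neg_g_lb hε hδ hr.1 (by linarith [hr.2]) hεδ
    · apply ContinuousOn.intervalIntegrable
      apply ContinuousOn.div continuousOn_const
      · exact (continuousOn_const.mul ((continuousOn_id.pow 2)))
      · intro r hr
        rw [uIcc_of_le hδA2] at hr
        have : 0 < r := hδ.trans_le hr.1
        positivity
  have hIcont : IntervalIntegrable (fun r : ℝ => 1 / (9 * r ^ 2)) volume δ (A/2) := by
    apply ContinuousOn.intervalIntegrable
    apply ContinuousOn.div continuousOn_const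
    · exact (continuousOn_const.mul ((continuousOn_id.pow 2)))
    · intro r hr
      rw [uIcc_of_le hδA2] at hr
      have : 0 < r := hδ.trans_le hr.1
      positivity
  have hval : (∫ r in δ..(A/2), 1 / (9 * r ^ 2)) = (1 / δ - 2 / A) / 9 := by
    have hF : ∀ r ∈ uIcc δ (A/2), HasDerivAt (fun x : ℝ => -(9 * x)⁻¹) (1 / (9 * r ^ 2)) r := by
      intro r hr
      rw [uIcc_of_le hδA2] at hr
      have hr0 : (0:ℝ) < r := hδ.trans_le hr.1
      have h9 : HasDerivAt (fun x : ℝ => 9 * x) 9 r := by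
        simpa using (hasDerivAt_id r).const_mul 9
      have h2 := (hasDerivAt_inv (by positivity : (9:ℝ) * r ≠ 0)).comp r h9
      have h3 := h2.neg
      refine h3.congr_deriv ?_
      field_simp
    rw [intervalIntegral.integral_eq_sub_of_hasDerivAt hF hIcont]
    field_simp
    ring
  linarith

lemma core (a Thatt A B : ℝ) (ha : 0 < a) (hThatt : 0 < Thatt) (hA : 0 < A)
    (εk : ℕ → ℝ) (hεpos : ∀ k, 0 < εk k)
    (hεlim : Filter.Tendsto εk Filter.atTop (nhds 0))
    (hk : ℕ → ℝ → ℝ → ℝ) (h : ℝ → ℝ → ℝ)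
    (hcont : ∀ k, ContinuousOn (fun p : ℝ × ℝ => hk k p.1 p.2)
      (Set.Icc (-a) a ×ˢ Set.Icc 0 Thatt))
    (hbdd : ∀ k, ∀ x ∈ Set.Icc (-a) a, ∀ t ∈ Set.Icc (0:ℝ) Thatt, |hk k x t| ≤ A)
    (hunif : TendstoUniformlyOn (fun k (p : ℝ × ℝ) => hk k p.1 p.2)
      (fun p : ℝ × ℝ => h p.1 p.2) Filter.atTop (Set.Icc (-a) a ×ˢ Set.Icc 0 Thatt))
    (hB : ∀ k, ∀ t ∈ Set.Icc (0:ℝ) Thatt,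
      (∫ x in (-a)..a, GEps A (εk k) (hk k x t)) ≤ B)
    (t : ℝ) (ht : t ∈ Set.Icc (0:ℝ) Thatt)
    (S : Set ℝ) (hSm : MeasurableSet S) (hSsub : S ⊆ Set.Ioc (-a) a)
    (hS0 : volume S ≠ 0) (hneg : ∀ x ∈ S, h x t ≤ 0) : False := by
  have haa : (-a : ℝ) ≤ a := by linarith
  have hmfin : volume S ≠ ⊤ := ((measure_mono hSsub).trans_lt measure_Ioc_lt_top).ne
  set mR := (volume S).toReal with hmRdef
  have hmR : 0 < mR := ENNReal.toReal_pos hS0 hmfin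
  -- B ≥ 0
  have hB0 : 0 ≤ B := by
    refine le_trans ?_ (hB 0 0 ⟨le_refl _, hThatt.le⟩)
    apply intervalIntegral.integral_nonneg haa
    intro x hx
    exact Gnonneg (hεpos 0) ((abs_le.1 (hbdd 0 x hx 0 ⟨le_refl _, hThatt.le⟩)).2)
  -- choose δ
  set C : ℝ := 9 * B / mR + 2 / A + 9 / mR with hCdef
  have hCpos : 0 < C := by positivity
  set δ : ℝ := min (A / 2) C⁻¹ with hδdef
  have hδpos : 0 < δ := lt_min (by linarith) (by positivity)
  have h2δ : 2 * δ ≤ A := by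
    have := min_le_left (A/2) C⁻¹; simp only [← hδdef] at this; linarith
  have hδA : δ ≤ A := by linarith
  have hC1δ : C ≤ 1 / δ := by
    have h1 : δ ≤ C⁻¹ := min_le_right _ _
    have := one_div_le_one_div_of_le hδpos h1
    simpa using this
  have hkey : B < (1 / δ - 2 / A) / 9 * mR := by
    have h1 : (9 * B / mR + 9 / mR) / 9 * mR = B + 1 := by
      field_simp
    nlinarith [hmR, hC1δ]
  -- choose k
  have hev1 : ∀ᶠ k in Filter.atTop, εk k < δ ^ 3 :=
    hεlim.eventually_lt_const (by positivity)
  have hev2 : ∀ᶠ k in Filter.atTop, ∀ p ∈ Set.Icc (-a) a ×ˢ Set.Icc (0:ℝ) Thatt,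
      dist (h p.1 p.2) (hk k p.1 p.2) < δ :=
    Metric.tendstoUniformlyOn_iff.1 hunif δ hδpos
  obtain ⟨k, hk1, hk2⟩ := (hev1.and hev2).exists
  have hε := hεpos k
  -- function f
  set f : ℝ → ℝ := fun x => GEps A (εk k) (hk k x t) with hfdef
  have hxc : ContinuousOn (fun x => hk k x t) (Set.Icc (-a) a) := by
    have : ContinuousOn (fun x : ℝ => ((x, t) : ℝ × ℝ)) (Set.Icc (-a) a) :=
      (continuous_id.prodMk continuous_const).continuousOn
    exact (hcont k).comp this (fun x hx => ⟨hx, ht⟩)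
  have hfc : ContinuousOn f (Set.Icc (-a) a) := (Gcont hε).comp_continuousOn hxc
  have hfint : IntegrableOn f (Set.Ioc (-a) a) :=
    (hfc.integrableOn_Icc).mono_set Set.Ioc_subset_Icc_self
  have hfnn : ∀ x ∈ Set.Icc (-a) a, 0 ≤ f x := fun x hx =>
    Gnonneg hε ((abs_le.1 (hbdd k x hx t ht)).2)
  -- chained inequalities
  have h1 : (∫ x in Set.Ioc (-a) a, f x) = ∫ x in (-a)..a, f x :=
    (intervalIntegral.integral_of_le haa).symm
  have h2 : (∫ x in S, f x) ≤ ∫ x in Set.Ioc (-a) a, f x := by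
    apply setIntegral_mono_set hfint
    · exact (ae_restrict_iff' measurableSet_Ioc).2 (Filter.Eventually.of_forall
        (fun x hx => hfnn x (Set.Ioc_subset_Icc_self hx)))
    · exact Filter.Eventually.of_forall hSsub
  have h3 : GEps A (εk k) δ * mR ≤ ∫ x in S, f x := by
    apply setIntegral_ge_of_const_le_real hSm hmfin _ (hfint.mono_set hSsub)
    intro x hx
    have hxI : x ∈ Set.Icc (-a) a := Set.Ioc_subset_Icc_self (hSsub hx)
    have hd := hk2 (x, t) ⟨hxI, ht⟩
    rw [Real.dist_eq, abs_sub_lt_iff] at hd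
    have hkδ : hk k x t ≤ δ := by
      have := hneg x hx; linarith [hd.1]
    exact Gmono hε hkδ hδA
  have h4 : (1 / δ - 2 / A) / 9 * mR ≤ GEps A (εk k) δ * mR :=
    mul_le_mul_of_nonneg_right (Gblow hε hδpos h2δ hk1.le) hmR.le
  have h5 := hB k t ht
  rw [← h1] at h5
  linarith

/-- Nonnegativity of the uniform limit: if `h_k → h` uniformly, `|h_k| ≤ A`, `ε_k → 0⁺`,
and the entropies `∫ G_{ε_k}(h_k(·,t))` are uniformly bounded, then `h ≥ 0` and each
zero set `{x : h(x,t) = 0}` has measure zero. -/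
theorem limit_nonneg_and_zero_set_null
    (a Thatt A B : ℝ) (ha : 0 < a) (hThatt : 0 < Thatt) (hA : 0 < A)
    (εk : ℕ → ℝ) (hεpos : ∀ k, 0 < εk k)
    (hεlim : Filter.Tendsto εk Filter.atTop (nhds 0))
    (hk : ℕ → ℝ → ℝ → ℝ) (h : ℝ → ℝ → ℝ)
    (hcont : ∀ k, ContinuousOn (fun p : ℝ × ℝ => hk k p.1 p.2)
      (Set.Icc (-a) a ×ˢ Set.Icc 0 Thatt))
    (hbdd : ∀ k, ∀ x ∈ Set.Icc (-a) a, ∀ t ∈ Set.Icc (0:ℝ) Thatt, |hk k x t| ≤ A)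
    (hunif : TendstoUniformlyOn (fun k (p : ℝ × ℝ) => hk k p.1 p.2)
      (fun p : ℝ × ℝ => h p.1 p.2) Filter.atTop (Set.Icc (-a) a ×ˢ Set.Icc 0 Thatt))
    (hB : ∀ k, ∀ t ∈ Set.Icc (0:ℝ) Thatt,
      (∫ x in (-a)..a, GEps A (εk k) (hk k x t)) ≤ B) :
    (∀ x ∈ Set.Icc (-a) a, ∀ t ∈ Set.Icc (0:ℝ) Thatt, 0 ≤ h x t) ∧
    (∀ t ∈ Set.Icc (0:ℝ) Thatt,
      MeasureTheory.volume {x ∈ Set.Ioo (-a) a | h x t = 0} = 0) := by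
  have hcontH : ContinuousOn (fun p : ℝ × ℝ => h p.1 p.2)
      (Set.Icc (-a) a ×ˢ Set.Icc 0 Thatt) :=
    hunif.continuousOn (Filter.Eventually.of_forall hcont).frequently
  have hxcont : ∀ t ∈ Set.Icc (0:ℝ) Thatt,
      ContinuousOn (fun x => h x t) (Set.Icc (-a) a) := by
    intro t ht
    have : ContinuousOn (fun x : ℝ => ((x, t) : ℝ × ℝ)) (Set.Icc (-a) a) :=
      (continuous_id.prodMk continuous_const).continuousOn
    exact hcontH.comp this (fun x hx => ⟨hx, ht⟩)
  constructor
  · -- nonnegativity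
    intro x₀ hx₀ t ht
    by_contra hlt
    push_neg at hlt
    have hcw := (hxcont t ht x₀ hx₀).tendsto
    have hev : ∀ᶠ x in nhdsWithin x₀ (Set.Icc (-a) a), h x t < 0 :=
      hcw.eventually (eventually_lt_nhds hlt)
    obtain ⟨r, hr, hball⟩ := Metric.mem_nhdsWithin_iff.1 hev
    set lo := max (-a) (x₀ - r) with hlo
    set hi := min a (x₀ + r) with hhi
    have hlohi : lo < hi := by
      rcases hx₀ with ⟨h1, h2⟩
      simp only [hlo, hhi, max_lt_iff, lt_min_iff]
      constructor <;> constructor <;> linarith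
    have hsub : Set.Ioo lo hi ⊆ Set.Ioc (-a) a := fun x hx =>
      ⟨lt_of_le_of_lt (le_max_left _ _) hx.1, le_of_lt (lt_of_lt_of_le hx.2 (min_le_left _ _))⟩
    refine core a Thatt A B ha hThatt hA εk hεpos hεlim hk h hcont hbdd hunif hB t ht
      (Set.Ioo lo hi) measurableSet_Ioo hsub ?_ ?_
    · rw [Real.volume_Ioo]
      simp only [ne_eq, ENNReal.ofReal_eq_zero, not_le]
      linarith
    · intro x hx
      have hxI : x ∈ Set.Icc (-a) a := Set.Ioc_subset_Icc_self (hsub hx)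
      have hdist : dist x x₀ < r := by
        rw [Real.dist_eq, abs_sub_lt_iff]
        constructor
        · have := hx.2; have := min_le_right a (x₀ + r); simp only [← hhi] at *; linarith
        · have := hx.1; have := le_max_right (-a) (x₀ - r); simp only [← hlo] at *; linarith
      exact (hball ⟨Metric.mem_ball.2 hdist, hxI⟩).le
  · -- zero set null
    intro t ht
    by_contra hne
    set S := {x ∈ Set.Ioo (-a) a | h x t = 0} with hSdef
    have hSsub : S ⊆ Set.Ioc (-a) a := fun x hx => Set.Ioo_subset_Ioc_self hx.1
    have hSm : MeasurableSet S := by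
      have hclosed : IsClosed (Set.Icc (-a) a ∩ (fun x => h x t) ⁻¹' {0}) :=
        (hxcont t ht).preimage_isClosed_of_isClosed isClosed_Icc isClosed_singleton
      have : S = Set.Ioo (-a) a ∩ (Set.Icc (-a) a ∩ (fun x => h x t) ⁻¹' {0}) := by
        ext x
        simp only [hSdef, Set.mem_setOf_eq, Set.mem_inter_iff, Set.mem_preimage,
          Set.mem_singleton_iff]
        constructor
        · rintro ⟨h1, h2⟩; exact ⟨h1, Set.Ioo_subset_Icc_self h1, h2⟩
        · rintro ⟨h1, _, h2⟩; exact ⟨h1, h2⟩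
      rw [this]
      exact measurableSet_Ioo.inter hclosed.measurableSet
    exact core a Thatt A B ha hThatt hA εk hεpos hεlim hk h hcont hbdd hunif hB t ht
      S hSm hSsub hne (fun x hx => hx.2.le)
end

section
/- Let h be a nonnegative classical periodic solution of the regularized Model II equation on [0,T] satisfying the additional boundary condition, and define 𝓔̃(u) = (1/2)·∫_{−a}^{a} ( u_x(x)² − u(x)² − (4/(3S))·x·u(x) ) dx. Then for every T′ ∈ [0,T], 𝓔̃(h(·,T′)) + S·∫_0^{T′} ∫_{−a}^{a} (h³ + ε)·( ∂_x( h + h_xx + (2/(3S))·x ) )² dx dt = 𝓔̃(h(·,0)). -/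
/-- A classical periodic solution of the regularized Model II equation
`h_t = -2h² h_x - S ∂_x[(h³+ε)(h_x+h_xxx)]` on `ℝ × [0,T]`, `2a`-periodic in `x`,
with continuous partial derivatives `∂_x^j h`, `0 ≤ j ≤ 4`, and `∂_t h`. -/
structure ClassicalSolutionII (a S ε T : ℝ) (h hx hxx hxxx hxxxx ht : ℝ → ℝ → ℝ) : Prop where
  periodic_x : ∀ x t, h (x + 2 * a) t = h x t
  cont_h : ContinuousOn (fun p : ℝ × ℝ => h p.1 p.2) (Set.univ ×ˢ Set.Icc 0 T)
  cont_hx : ContinuousOn (fun p : ℝ × ℝ => hx p.1 p.2) (Set.univ ×ˢ Set.Icc 0 T)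
  cont_hxx : ContinuousOn (fun p : ℝ × ℝ => hxx p.1 p.2) (Set.univ ×ˢ Set.Icc 0 T)
  cont_hxxx : ContinuousOn (fun p : ℝ × ℝ => hxxx p.1 p.2) (Set.univ ×ˢ Set.Icc 0 T)
  cont_hxxxx : ContinuousOn (fun p : ℝ × ℝ => hxxxx p.1 p.2) (Set.univ ×ˢ Set.Icc 0 T)
  cont_ht : ContinuousOn (fun p : ℝ × ℝ => ht p.1 p.2) (Set.univ ×ˢ Set.Icc 0 T)
  deriv_hx : ∀ x : ℝ, ∀ t ∈ Set.Icc (0:ℝ) T, HasDerivAt (fun y => h y t) (hx x t) x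
  deriv_hxx : ∀ x : ℝ, ∀ t ∈ Set.Icc (0:ℝ) T, HasDerivAt (fun y => hx y t) (hxx x t) x
  deriv_hxxx : ∀ x : ℝ, ∀ t ∈ Set.Icc (0:ℝ) T, HasDerivAt (fun y => hxx y t) (hxxx x t) x
  deriv_hxxxx : ∀ x : ℝ, ∀ t ∈ Set.Icc (0:ℝ) T, HasDerivAt (fun y => hxxx y t) (hxxxx x t) x
  deriv_ht : ∀ x : ℝ, ∀ t ∈ Set.Icc (0:ℝ) T,
    HasDerivWithinAt (fun s => h x s) (ht x t) (Set.Icc 0 T) t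
  /-- The PDE `h_t = -2h² h_x - S ∂_x[(h³+ε)(h_x+h_xxx)]`, stated as: the flux
  `S (h³+ε)(h_x+h_xxx)` has spatial derivative `-h_t - 2h² h_x`. -/
  pde : ∀ x : ℝ, ∀ t ∈ Set.Icc (0:ℝ) T,
    HasDerivAt (fun y => S * (((h y t) ^ 3 + ε) * (hx y t + hxxx y t)))
      (-(ht x t) - 2 * (h x t)^2 * hx x t) x

open MeasureTheory intervalIntegral Set in
lemma param_cont (a T : ℝ) (ha : 0 < a) (F : ℝ → ℝ → ℝ)
    (hF : ContinuousOn (fun p : ℝ × ℝ => F p.1 p.2) (Set.univ ×ˢ Set.Icc 0 T)) :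
    ContinuousOn (fun t => ∫ x in (-a)..a, F x t) (Set.Icc 0 T) := by
  have hK : IsCompact ((Icc (-a) a) ×ˢ (Icc (0:ℝ) T)) := isCompact_Icc.prod isCompact_Icc
  have hsub : (Icc (-a) a) ×ˢ (Icc (0:ℝ) T) ⊆ Set.univ ×ˢ Set.Icc 0 T := by
    intro p hp; exact ⟨trivial, hp.2⟩
  have UC := hK.uniformContinuousOn_of_continuous (hF.mono hsub)
  rw [Metric.uniformContinuousOn_iff] at UC
  have hcx : ∀ t ∈ Icc (0:ℝ) T, Continuous (fun x => F x t) := by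
    intro t htm
    rw [← continuousOn_univ]
    exact hF.comp (continuous_id.prodMk continuous_const).continuousOn
      (fun x _ => ⟨trivial, htm⟩)
  intro t htm
  rw [Metric.continuousWithinAt_iff]
  intro ε hε
  have hε' : 0 < ε / (2 * a + 1) := by positivity
  obtain ⟨δ, hδ, hUC⟩ := UC _ hε'
  refine ⟨δ, hδ, fun t' ht'm hdist => ?_⟩
  have hint : ∀ s ∈ Icc (0:ℝ) T, IntervalIntegrable (fun x => F x s) volume (-a) a :=
    fun s hs => (hcx s hs).intervalIntegrable _ _
  have heq : dist (∫ x in (-a)..a, F x t') (∫ x in (-a)..a, F x t)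
      = ‖∫ x in (-a)..a, (F x t' - F x t)‖ := by
    rw [dist_eq_norm, ← intervalIntegral.integral_sub (hint t' ht'm) (hint t htm)]
  rw [heq]
  have hb : ‖∫ x in (-a)..a, (F x t' - F x t)‖ ≤ (ε / (2 * a + 1)) * |a - (-a)| := by
    apply intervalIntegral.norm_integral_le_of_norm_le_const
    intro x hxm
    have hxm' : x ∈ Icc (-a) a := by
      rw [Set.uIoc_of_le (by linarith : (-a:ℝ) ≤ a)] at hxm
      exact Ioc_subset_Icc_self hxm
    have hd2 : dist ((x,t') : ℝ × ℝ) ((x,t) : ℝ × ℝ) < δ := by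
      rw [Prod.dist_eq, dist_self]; exact max_lt hδ hdist
    have := hUC (x, t') ⟨hxm', ht'm⟩ (x, t) ⟨hxm', htm⟩ hd2
    rw [Real.norm_eq_abs, ← Real.dist_eq]
    exact this.le
  calc ‖∫ x in (-a)..a, (F x t' - F x t)‖ ≤ (ε / (2 * a + 1)) * |a - (-a)| := hb
    _ < ε := by
        rw [abs_of_pos (by linarith : (0:ℝ) < a - (-a))]
        rw [div_mul_eq_mul_div, div_lt_iff₀ (by positivity)]
        nlinarith

set_option maxHeartbeats 2000000 in
open MeasureTheory intervalIntegral Set in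
/-- Energy identity for regularized Model II: with
`𝓔̃(u) = (1/2)∫ (u_x² - u² - (4/(3S)) x u) dx`,
`𝓔̃(h(·,T')) + S∫₀^{T'}∫ (h³+ε)(∂_x(h + h_xx + (2/(3S))x))² = 𝓔̃(h(·,0))`
for nonnegative solutions satisfying the additional boundary condition. -/
theorem modelII_energy_identity
    (a S ε T : ℝ) (ha : 0 < a) (hS : 0 < S) (hε : 0 < ε) (hT : 0 < T)
    (h hx hxx hxxx hxxxx ht : ℝ → ℝ → ℝ)
    (hsol : ClassicalSolutionII a S ε T h hx hxx hxxx hxxxx ht)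
    (hnonneg : ∀ x : ℝ, ∀ t ∈ Set.Icc (0:ℝ) T, 0 ≤ h x t)
    (hbc : ∀ t ∈ Set.Icc (0:ℝ) T,
      a * (hx a t + hxxx a t + 2 / (3 * S))
        + a * (hx (-a) t + hxxx (-a) t + 2 / (3 * S)) = 0) :
    ∀ T' ∈ Set.Icc (0:ℝ) T,
      (1/2) * (∫ x in (-a)..a,
          ((hx x T')^2 - (h x T')^2 - (4 / (3 * S)) * x * h x T'))
        + S * ∫ t in (0:ℝ)..T', ∫ x in (-a)..a,
            ((h x t) ^ 3 + ε) * (hx x t + hxxx x t + 2 / (3 * S))^2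
      = (1/2) * (∫ x in (-a)..a,
          ((hx x 0)^2 - (h x 0)^2 - (4 / (3 * S)) * x * h x 0)) := by
  intro T' hT'
  set E : ℝ → ℝ := fun t => (1/2) * (∫ x in (-a)..a,
      ((hx x t)^2 - (h x t)^2 - (4 / (3 * S)) * x * h x t)) with hEdef
  set J : ℝ → ℝ := fun t => ∫ x in (-a)..a,
      ((h x t) ^ 3 + ε) * (hx x t + hxxx x t + 2 / (3 * S))^2 with hJdef
  set P : ℝ → ℝ → ℝ := fun x t => h x t + hxx x t + (2 / (3 * S)) * x with hPdef
  have haa : (-a : ℝ) ≤ a := by linarith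
  have hS3 : (3:ℝ) * S ≠ 0 := by positivity
  -- continuity in x at fixed time
  have contx : ∀ (f : ℝ → ℝ → ℝ),
      ContinuousOn (fun p : ℝ × ℝ => f p.1 p.2) (Set.univ ×ˢ Set.Icc 0 T) →
      ∀ t ∈ Set.Icc (0:ℝ) T, Continuous (fun x => f x t) := by
    intro f hf t htm
    rw [← continuousOn_univ]
    exact hf.comp (continuous_id.prodMk continuous_const).continuousOn
      (fun x _ => ⟨trivial, htm⟩)
  have ch := contx h hsol.cont_h
  have chx := contx hx hsol.cont_hx
  have chxx := contx hxx hsol.cont_hxx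
  have chxxx := contx hxxx hsol.cont_hxxx
  have cht := contx ht hsol.cont_ht
  have cP : ∀ t ∈ Set.Icc (0:ℝ) T, Continuous (fun x => P x t) := by
    intro t htm
    exact ((ch t htm).add (chxx t htm)).add (continuous_const.mul continuous_id)
  -- periodicity of spatial derivatives
  have perstep : ∀ (f g : ℝ → ℝ → ℝ),
      (∀ x : ℝ, ∀ t ∈ Set.Icc (0:ℝ) T, HasDerivAt (fun y => f y t) (g x t) x) →
      (∀ x : ℝ, ∀ t ∈ Set.Icc (0:ℝ) T, f (x + 2*a) t = f x t) →
      ∀ x : ℝ, ∀ t ∈ Set.Icc (0:ℝ) T, g (x + 2*a) t = g x t := by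
    intro f g hderiv hper x t htm
    have d1 : HasDerivAt (fun y => f (y + 2*a) t) (g (x + 2*a) t * 1) x := by
      have := (hderiv (x + 2*a) t htm).comp x ((hasDerivAt_id x).add_const (2*a)); exact this
    have d2 : (fun y => f (y + 2*a) t) = (fun y => f y t) :=
      funext fun y => hper y t htm
    rw [d2] at d1
    have := d1.unique (hderiv x t htm)
    linarith [this]
  have per_hx : ∀ x : ℝ, ∀ t ∈ Set.Icc (0:ℝ) T, hx (x + 2*a) t = hx x t :=
    perstep h hx hsol.deriv_hx (fun x t _ => by
      have := hsol.periodic_x x t; rw [show x + 2*a = x + 2 * a from by ring] at *; exact this)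
  have per_hxx : ∀ x : ℝ, ∀ t ∈ Set.Icc (0:ℝ) T, hxx (x + 2*a) t = hxx x t :=
    perstep hx hxx hsol.deriv_hxx per_hx
  have per_hxxx : ∀ x : ℝ, ∀ t ∈ Set.Icc (0:ℝ) T, hxxx (x + 2*a) t = hxxx x t :=
    perstep hxx hxxx hsol.deriv_hxxx per_hxx
  have hsum : (-a) + 2*a = a := by ring
  have bd_h : ∀ t, h a t = h (-a) t := fun t => by
    have h2 := hsol.periodic_x (-a) t; rwa [hsum] at h2
  have bd_hx : ∀ t ∈ Set.Icc (0:ℝ) T, hx a t = hx (-a) t := fun t htm => by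
    have h2 := per_hx (-a) t htm; rwa [hsum] at h2
  have bd_hxx : ∀ t ∈ Set.Icc (0:ℝ) T, hxx a t = hxx (-a) t := fun t htm => by
    have h2 := per_hxx (-a) t htm; rwa [hsum] at h2
  have bd_hxxx : ∀ t ∈ Set.Icc (0:ℝ) T, hxxx a t = hxxx (-a) t := fun t htm => by
    have h2 := per_hxxx (-a) t htm; rwa [hsum] at h2
  -- vanishing of w at the boundary
  have hw0a : ∀ t ∈ Set.Icc (0:ℝ) T, hx a t + hxxx a t + 2 / (3 * S) = 0 := by
    intro t htm
    have hb := hbc t htm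
    rw [← bd_hx t htm, ← bd_hxxx t htm] at hb
    have h2 : a * (hx a t + hxxx a t + 2 / (3 * S)) = 0 := by linarith
    exact (mul_eq_zero.mp h2).resolve_left (ne_of_gt ha)
  have hw0b : ∀ t ∈ Set.Icc (0:ℝ) T, hx (-a) t + hxxx (-a) t + 2 / (3 * S) = 0 := by
    intro t htm
    rw [← bd_hx t htm, ← bd_hxxx t htm]; exact hw0a t htm
  -- time-slice continuity and uIcc inclusion helpers
  have huIcc2 : ∀ t1 ∈ Set.Icc (0:ℝ) T, ∀ t2 ∈ Set.Icc (0:ℝ) T,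
      Set.uIcc t1 t2 ⊆ Set.Icc 0 T := by
    intro t1 h1 t2 h2
    rw [← Set.uIcc_of_le hT.le]
    exact Set.uIcc_subset_uIcc (by rw [Set.uIcc_of_le hT.le]; exact h1)
      (by rw [Set.uIcc_of_le hT.le]; exact h2)
  have cont_h_t : ∀ x : ℝ, ContinuousOn (fun s => h x s) (Set.Icc 0 T) := fun x =>
    hsol.cont_h.comp (continuous_const.prodMk continuous_id).continuousOn
      (fun s hs => ⟨trivial, hs⟩)
  have cont_ht_t : ∀ x : ℝ, ContinuousOn (fun s => ht x s) (Set.Icc 0 T) := fun x =>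
    hsol.cont_ht.comp (continuous_const.prodMk continuous_id).continuousOn
      (fun s hs => ⟨trivial, hs⟩)
  -- FTC in time
  have hΔ : ∀ (x t1 t2 : ℝ), t1 ∈ Set.Icc (0:ℝ) T → t2 ∈ Set.Icc (0:ℝ) T →
      h x t2 - h x t1 = ∫ s in t1..t2, ht x s := by
    intro x t1 t2 h1 h2
    refine (intervalIntegral.integral_eq_sub_of_hasDeriv_right
      ((cont_h_t x).mono (huIcc2 t1 h1 t2 h2)) ?_
      (((cont_ht_t x).mono (huIcc2 t1 h1 t2 h2)).intervalIntegrable)).symm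
    intro s hs
    have hs0 : 0 ≤ s := le_of_lt (lt_of_le_of_lt (le_min h1.1 h2.1) hs.1)
    have hsT : s < T := lt_of_lt_of_le hs.2 (max_le h1.2 h2.2)
    exact (hsol.deriv_ht x s ⟨hs0, hsT.le⟩).mono_of_mem_nhdsWithin
      (Icc_mem_nhdsGT_of_mem ⟨hs0, hsT⟩)
  -- energy difference identity
  have hEdiff : ∀ t1 ∈ Set.Icc (0:ℝ) T, ∀ t2 ∈ Set.Icc (0:ℝ) T,
      E t2 - E t1 = -(1/2) * ∫ x in (-a)..a,
        (h x t2 - h x t1) * (P x t1 + P x t2) := by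
    intro t1 h1 t2 h2
    have iE : ∀ t ∈ Set.Icc (0:ℝ) T, IntervalIntegrable
        (fun x => (hx x t)^2 - (h x t)^2 - (4 / (3 * S)) * x * h x t) volume (-a) a := by
      intro t htm
      exact ((((chx t htm).pow 2).sub ((ch t htm).pow 2)).sub
        (((continuous_const.mul continuous_id).mul (ch t htm)))).intervalIntegrable _ _
    -- integration by parts for the gradient term
    have hu : ∀ x ∈ Set.uIcc (-a) a, HasDerivAt (fun y => h y t2 - h y t1)
        (hx x t2 - hx x t1) x := fun x _ =>
      (hsol.deriv_hx x t2 h2).sub (hsol.deriv_hx x t1 h1)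
    have hv : ∀ x ∈ Set.uIcc (-a) a, HasDerivAt (fun y => hx y t1 + hx y t2)
        (hxx x t1 + hxx x t2) x := fun x _ =>
      (hsol.deriv_hxx x t1 h1).add (hsol.deriv_hxx x t2 h2)
    have iu' : IntervalIntegrable (fun x => hx x t2 - hx x t1) volume (-a) a :=
      ((chx t2 h2).sub (chx t1 h1)).intervalIntegrable _ _
    have iv' : IntervalIntegrable (fun x => hxx x t1 + hxx x t2) volume (-a) a :=
      ((chxx t1 h1).add (chxx t2 h2)).intervalIntegrable _ _
    have ibp := intervalIntegral.integral_mul_deriv_eq_deriv_mul hu hv iu' iv'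
    have hb0 : (h a t2 - h a t1) * (hx a t1 + hx a t2)
        - (h (-a) t2 - h (-a) t1) * (hx (-a) t1 + hx (-a) t2) = 0 := by
      rw [bd_h t2, bd_h t1, bd_hx t1 h1, bd_hx t2 h2]; ring
    have ibp' : (∫ x in (-a)..a, (hx x t2 - hx x t1) * (hx x t1 + hx x t2))
        = - ∫ x in (-a)..a, (h x t2 - h x t1) * (hxx x t1 + hxx x t2) := by
      have hgg : (∫ x in (-a)..a, (h x t2 - h x t1) * (hxx x t1 + hxx x t2)) =
          (h a t2 - h a t1) * (hx a t1 + hx a t2)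
          - (h (-a) t2 - h (-a) t1) * (hx (-a) t1 + hx (-a) t2)
          - ∫ x in (-a)..a, (hx x t2 - hx x t1) * (hx x t1 + hx x t2) := ibp
      rw [hb0] at hgg
      linarith [hgg]
    have irest : IntervalIntegrable (fun x => (h x t2 - h x t1) * (h x t1 + h x t2)
        + (4 / (3 * S)) * x * (h x t2 - h x t1)) volume (-a) a := by
      exact ((((ch t2 h2).sub (ch t1 h1)).mul ((ch t1 h1).add (ch t2 h2))).add
        (((continuous_const.mul continuous_id).mul ((ch t2 h2).sub (ch t1 h1))))).intervalIntegrable _ _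
    have igrad : IntervalIntegrable (fun x => (hx x t2 - hx x t1) * (hx x t1 + hx x t2))
        volume (-a) a :=
      (((chx t2 h2).sub (chx t1 h1)).mul ((chx t1 h1).add (chx t2 h2))).intervalIntegrable _ _
    have ihxx : IntervalIntegrable (fun x => (h x t2 - h x t1) * (hxx x t1 + hxx x t2))
        volume (-a) a :=
      ((((ch t2 h2).sub (ch t1 h1)).mul ((chxx t1 h1).add (chxx t2 h2)))).intervalIntegrable _ _
    calc E t2 - E t1
        = (1/2) * ((∫ x in (-a)..a, ((hx x t2)^2 - (h x t2)^2 - (4 / (3 * S)) * x * h x t2))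
          - (∫ x in (-a)..a, ((hx x t1)^2 - (h x t1)^2 - (4 / (3 * S)) * x * h x t1))) := by
          simp only [hEdef]; ring
      _ = (1/2) * ∫ x in (-a)..a,
            (((hx x t2)^2 - (h x t2)^2 - (4 / (3 * S)) * x * h x t2)
            - ((hx x t1)^2 - (h x t1)^2 - (4 / (3 * S)) * x * h x t1)) := by
          rw [intervalIntegral.integral_sub (iE t2 h2) (iE t1 h1)]
      _ = (1/2) * ∫ x in (-a)..a,
            ((hx x t2 - hx x t1) * (hx x t1 + hx x t2)
            - ((h x t2 - h x t1) * (h x t1 + h x t2)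
              + (4 / (3 * S)) * x * (h x t2 - h x t1))) := by
          congr 1
          apply intervalIntegral.integral_congr
          intro x _
          ring
      _ = (1/2) * ((∫ x in (-a)..a, (hx x t2 - hx x t1) * (hx x t1 + hx x t2))
            - ∫ x in (-a)..a, ((h x t2 - h x t1) * (h x t1 + h x t2)
              + (4 / (3 * S)) * x * (h x t2 - h x t1))) := by
          rw [intervalIntegral.integral_sub igrad irest]
      _ = (1/2) * ((- ∫ x in (-a)..a, (h x t2 - h x t1) * (hxx x t1 + hxx x t2))
            - ∫ x in (-a)..a, ((h x t2 - h x t1) * (h x t1 + h x t2)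
              + (4 / (3 * S)) * x * (h x t2 - h x t1))) := by
          rw [ibp']
      _ = -(1/2) * ((∫ x in (-a)..a, (h x t2 - h x t1) * (hxx x t1 + hxx x t2))
            + ∫ x in (-a)..a, ((h x t2 - h x t1) * (h x t1 + h x t2)
              + (4 / (3 * S)) * x * (h x t2 - h x t1))) := by ring
      _ = -(1/2) * ∫ x in (-a)..a, ((h x t2 - h x t1) * (hxx x t1 + hxx x t2)
            + ((h x t2 - h x t1) * (h x t1 + h x t2)
              + (4 / (3 * S)) * x * (h x t2 - h x t1))) := by
          rw [intervalIntegral.integral_add ihxx irest]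
      _ = -(1/2) * ∫ x in (-a)..a, (h x t2 - h x t1) * (P x t1 + P x t2) := by
          congr 1
          apply intervalIntegral.integral_congr
          intro x _
          simp only [hPdef]
          ring
  -- the spatial identity at fixed time
  have hI : ∀ t ∈ Set.Icc (0:ℝ) T,
      (∫ x in (-a)..a, ht x t * P x t) = S * J t := by
    intro t htm
    have dP : ∀ x : ℝ, HasDerivAt (fun y => P y t) (hx x t + hxxx x t + 2 / (3 * S)) x := by
      intro x
      have hd : HasDerivAt (fun y => h y t + hxx y t + (2 / (3 * S)) * y)
          ((hx x t + hxxx x t) + (2 / (3 * S)) * 1) x :=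
        ((hsol.deriv_hx x t htm).add (hsol.deriv_hxxx x t htm)).add
          ((hasDerivAt_id x).const_mul (2 / (3 * S)))
      simp only [hPdef]
      convert hd using 1
      ring
    have dG : ∀ x : ℝ, HasDerivAt
        (fun y => S * (((h y t) ^ 3 + ε) * (hx y t + hxxx y t)) + (2/3) * (h y t)^3)
        (-(ht x t)) x := by
      intro x
      have d1 := hsol.pde x t htm
      have d2 : HasDerivAt (fun y => (2/3) * (h y t)^3)
          ((2/3) * ((3 : ℕ) * (h x t)^(3-1) * hx x t)) x :=
        ((hsol.deriv_hx x t htm).pow 3).const_mul (2/3)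
      have d3 := d1.add d2
      refine d3.congr_deriv ?_
      push_cast
      ring
    have iw : IntervalIntegrable (fun x => hx x t + hxxx x t + 2 / (3 * S)) volume (-a) a :=
      (((chx t htm).add (chxxx t htm)).add continuous_const).intervalIntegrable _ _
    have iht : IntervalIntegrable (fun x => -(ht x t)) volume (-a) a :=
      ((cht t htm).neg).intervalIntegrable _ _
    have ibp := intervalIntegral.integral_mul_deriv_eq_deriv_mul
      (fun x _ => dP x) (fun x _ => dG x) iw iht
    have e1 : (∫ x in (-a)..a, P x t * -(ht x t)) = - ∫ x in (-a)..a, ht x t * P x t := by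
      rw [← intervalIntegral.integral_neg]
      apply intervalIntegral.integral_congr
      intro x _
      ring
    rw [e1] at ibp
    -- boundary values of G
    have hwa : hx a t + hxxx a t = -(2 / (3 * S)) := by
      have := hw0a t htm; linarith
    have hwb : hx (-a) t + hxxx (-a) t = -(2 / (3 * S)) := by
      have := hw0b t htm; linarith
    have hGa : S * (((h a t) ^ 3 + ε) * (hx a t + hxxx a t)) + (2/3) * (h a t)^3
        = -(2/3) * ε := by
      rw [hwa]; field_simp; ring
    have hGb : S * (((h (-a) t) ^ 3 + ε) * (hx (-a) t + hxxx (-a) t)) + (2/3) * (h (-a) t)^3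
        = -(2/3) * ε := by
      rw [hwb]; field_simp; ring
    rw [hGa, hGb] at ibp
    -- the bulk term
    have iJ : IntervalIntegrable (fun x => S * (((h x t) ^ 3 + ε)
        * (hx x t + hxxx x t + 2 / (3 * S))^2)) volume (-a) a := by
      exact (continuous_const.mul ((((ch t htm).pow 3).add continuous_const).mul
        ((((chx t htm).add (chxxx t htm)).add continuous_const).pow 2))).intervalIntegrable _ _
    have iw2 : IntervalIntegrable (fun x => (2/3) * ε * (hx x t + hxxx x t + 2 / (3 * S)))
        volume (-a) a :=
      (continuous_const.mul (((chx t htm).add (chxxx t htm)).add continuous_const)).intervalIntegrable _ _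
    have e2 : (∫ x in (-a)..a, (hx x t + hxxx x t + 2 / (3 * S))
          * (S * (((h x t) ^ 3 + ε) * (hx x t + hxxx x t)) + (2/3) * (h x t)^3))
        = S * J t - (2/3) * ε * ∫ x in (-a)..a, (hx x t + hxxx x t + 2 / (3 * S)) := by
      have hcongr : Set.EqOn
          (fun x => (hx x t + hxxx x t + 2 / (3 * S))
            * (S * (((h x t) ^ 3 + ε) * (hx x t + hxxx x t)) + (2/3) * (h x t)^3))
          (fun x => S * (((h x t) ^ 3 + ε) * (hx x t + hxxx x t + 2 / (3 * S))^2)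
            - (2/3) * ε * (hx x t + hxxx x t + 2 / (3 * S)))
          (Set.uIcc (-a) a) := by
        intro x _
        simp only []
        field_simp
        ring
      rw [intervalIntegral.integral_congr hcongr,
        intervalIntegral.integral_sub iJ iw2,
        intervalIntegral.integral_const_mul, intervalIntegral.integral_const_mul, hJdef]
    rw [e2] at ibp
    -- total mass of w
    have e3 : (∫ x in (-a)..a, (hx x t + hxxx x t + 2 / (3 * S))) = P a t - P (-a) t :=
      intervalIntegral.integral_eq_sub_of_hasDerivAt (fun x _ => dP x) iw
    have e4 : P a t = P (-a) t + (2 / (3 * S)) * (2 * a) := by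
      simp only [hPdef]
      rw [bd_h t, bd_hxx t htm]
      ring
    rw [e3, e4] at ibp
    ring_nf at ibp ⊢
    linarith [ibp]
  -- derivative of the energy
  have hEderiv : ∀ t ∈ Set.Ioo (0:ℝ) T,
      HasDerivAt E (-(∫ x in (-a)..a, ht x t * P x t)) t := by
    intro t htIoo
    have htm : t ∈ Set.Icc (0:ℝ) T := ⟨htIoo.1.le, htIoo.2.le⟩
    have hK : IsCompact ((Set.Icc (-a) a) ×ˢ (Set.Icc (0:ℝ) T)) :=
      isCompact_Icc.prod isCompact_Icc
    have hsubK : (Set.Icc (-a) a) ×ˢ (Set.Icc (0:ℝ) T) ⊆ Set.univ ×ˢ Set.Icc 0 T :=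
      fun p hp => ⟨trivial, hp.2⟩
    have contP : ContinuousOn (fun p : ℝ × ℝ => P p.1 p.2) (Set.univ ×ˢ Set.Icc 0 T) := by
      simp only [hPdef]
      exact (hsol.cont_h.add hsol.cont_hxx).add
        ((continuous_const.mul continuous_fst).continuousOn)
    obtain ⟨Mp, hMp⟩ := hK.exists_bound_of_continuousOn (contP.mono hsubK)
    obtain ⟨Mt, hMt⟩ := hK.exists_bound_of_continuousOn (hsol.cont_ht.mono hsubK)
    have hz : ((0:ℝ), (0:ℝ)) ∈ (Set.Icc (-a) a) ×ˢ (Set.Icc (0:ℝ) T) := by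
      constructor
      · show (0:ℝ) ∈ Set.Icc (-a) a
        exact ⟨by linarith, ha.le⟩
      · show (0:ℝ) ∈ Set.Icc 0 T
        exact ⟨le_rfl, hT.le⟩
    have hMp0 : 0 ≤ Mp := le_trans (norm_nonneg _) (hMp _ hz)
    have hMt0 : 0 ≤ Mt := le_trans (norm_nonneg _) (hMt _ hz)
    have UCht := hK.uniformContinuousOn_of_continuous (hsol.cont_ht.mono hsubK)
    have UCP := hK.uniformContinuousOn_of_continuous (contP.mono hsubK)
    rw [Metric.uniformContinuousOn_iff] at UCht UCP
    rw [hasDerivAt_iff_isLittleO, Asymptotics.isLittleO_iff]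
    intro C hC
    have hden1 : (0:ℝ) < 2 * a * (2 * Mp + 1) := by nlinarith
    have hden2 : (0:ℝ) < 2 * a * (Mt + 1) := by nlinarith
    obtain ⟨ε1, hε1, hε1e⟩ : ∃ e : ℝ, 0 < e ∧ e * (2 * a * (2 * Mp + 1)) = C :=
      ⟨C / (2 * a * (2 * Mp + 1)), div_pos hC hden1, div_mul_cancel₀ _ (ne_of_gt hden1)⟩
    obtain ⟨ε2, hε2, hε2e⟩ : ∃ e : ℝ, 0 < e ∧ e * (2 * a * (Mt + 1)) = C :=
      ⟨C / (2 * a * (Mt + 1)), div_pos hC hden2, div_mul_cancel₀ _ (ne_of_gt hden2)⟩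
    have key1 : a * (2 * ε1 * Mp) ≤ C / 2 := by
      nlinarith [mul_nonneg hε1.le ha.le]
    have key2 : a * (Mt * ε2) ≤ C / 2 := by
      nlinarith [mul_nonneg hε2.le ha.le]
    obtain ⟨δ1, hδ1, hU1⟩ := UCht ε1 hε1
    obtain ⟨δ2, hδ2, hU2⟩ := UCP ε2 hε2
    have hmem : Set.Ioo (0:ℝ) T ∈ nhds t := isOpen_Ioo.mem_nhds htIoo
    have hball : ∀ᶠ t' in nhds t, dist t' t < min δ1 δ2 :=
      Filter.eventually_of_mem (Metric.ball_mem_nhds t (lt_min hδ1 hδ2)) (fun y hy => hy)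
    filter_upwards [hmem, hball] with t' ht'o hdist
    have htm' : t' ∈ Set.Icc (0:ℝ) T := ⟨ht'o.1.le, ht'o.2.le⟩
    have hd1 : dist t' t < δ1 := lt_of_lt_of_le hdist (min_le_left _ _)
    have hd2 : dist t' t < δ2 := lt_of_lt_of_le hdist (min_le_right _ _)
    -- integrability
    have iΔP : IntervalIntegrable (fun x => (h x t' - h x t) * (P x t + P x t'))
        volume (-a) a :=
      (((ch t' htm').sub (ch t htm)).mul ((cP t htm).add (cP t' htm'))).intervalIntegrable _ _
    have ihtP : IntervalIntegrable (fun x => ht x t * P x t) volume (-a) a :=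
      ((cht t htm).mul (cP t htm)).intervalIntegrable _ _
    have ihtPc : IntervalIntegrable (fun x => (2*(t'-t)) * (ht x t * P x t)) volume (-a) a :=
      (continuous_const.mul ((cht t htm).mul (cP t htm))).intervalIntegrable _ _
    -- algebraic reduction
    have hEq : E t' - E t - (t' - t) • (-(∫ x in (-a)..a, ht x t * P x t))
        = -(1/2) * ∫ x in (-a)..a, ((h x t' - h x t) * (P x t + P x t')
            - (2*(t'-t)) * (ht x t * P x t)) := by
      rw [smul_eq_mul, hEdiff t htm t' htm',
        intervalIntegral.integral_sub iΔP ihtPc, intervalIntegral.integral_const_mul]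
      ring
    -- pointwise bound on the integrand
    have hbound : ∀ x ∈ Set.uIoc (-a) a,
        ‖(h x t' - h x t) * (P x t + P x t') - (2*(t'-t)) * (ht x t * P x t)‖
        ≤ |t' - t| * (2 * ε1 * Mp + Mt * ε2) := by
      intro x hxm
      have hxI : x ∈ Set.Icc (-a) a := by
        rw [Set.uIoc_of_le haa] at hxm
        exact Set.Ioc_subset_Icc_self hxm
      -- bound |h x t' - h x t - (t'-t) ht x t|
      have ihts : IntervalIntegrable (fun s => ht x s) volume t t' :=
        ((cont_ht_t x).mono (huIcc2 t htm t' htm')).intervalIntegrable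
      have q1 : (∫ s in t..t', (ht x s - ht x t))
          = (∫ s in t..t', ht x s) - (t' - t) * ht x t := by
        rw [intervalIntegral.integral_sub ihts intervalIntegrable_const,
          intervalIntegral.integral_const, smul_eq_mul]
      have q2 : h x t' - h x t - (t' - t) * ht x t = ∫ s in t..t', (ht x s - ht x t) := by
        rw [q1, ← hΔ x t t' htm htm']
      have hA : |h x t' - h x t - (t' - t) * ht x t| ≤ ε1 * |t' - t| := by
        rw [← Real.norm_eq_abs, q2]
        apply intervalIntegral.norm_integral_le_of_norm_le_const
        intro s hs
        have hsI : s ∈ Set.Icc (0:ℝ) T :=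
          huIcc2 t htm t' htm' (Set.uIoc_subset_uIcc hs)
        have habs : |s - t| ≤ |t' - t| := by
          have hl := neg_abs_le (t' - t)
          have hu := le_abs_self (t' - t)
          rcases Set.mem_uIoc.mp hs with ⟨ha1, ha2⟩ | ⟨ha1, ha2⟩ <;>
            (rw [abs_le]; constructor <;> linarith)
        have hdd : dist ((x, s) : ℝ × ℝ) ((x, t) : ℝ × ℝ) < δ1 := by
          rw [Prod.dist_eq, dist_self]
          apply max_lt hδ1
          rw [Real.dist_eq]
          calc |s - t| ≤ |t' - t| := habs
            _ < δ1 := by rw [← Real.dist_eq]; exact hd1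
        have := hU1 (x, s) ⟨hxI, hsI⟩ (x, t) ⟨hxI, htm⟩ hdd
        rw [Real.dist_eq] at this
        rw [Real.norm_eq_abs]
        exact this.le
      have hP1 : |P x t| ≤ Mp := by
        have := hMp (x, t) ⟨hxI, htm⟩; rwa [Real.norm_eq_abs] at this
      have hP2 : |P x t'| ≤ Mp := by
        have := hMp (x, t') ⟨hxI, htm'⟩; rwa [Real.norm_eq_abs] at this
      have hht : |ht x t| ≤ Mt := by
        have := hMt (x, t) ⟨hxI, htm⟩; rwa [Real.norm_eq_abs] at this
      have hPd : |P x t' - P x t| ≤ ε2 := by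
        have hdd : dist ((x, t') : ℝ × ℝ) ((x, t) : ℝ × ℝ) < δ2 := by
          rw [Prod.dist_eq, dist_self]
          exact max_lt hδ2 hd2
        have := hU2 (x, t') ⟨hxI, htm'⟩ (x, t) ⟨hxI, htm⟩ hdd
        rw [Real.dist_eq] at this
        exact this.le
      have hsplit : (h x t' - h x t) * (P x t + P x t') - (2*(t'-t)) * (ht x t * P x t)
          = (h x t' - h x t - (t' - t) * ht x t) * (P x t + P x t')
            + (t' - t) * ht x t * (P x t' - P x t) := by ring
      rw [Real.norm_eq_abs, hsplit]
      have hPP : |P x t + P x t'| ≤ 2 * Mp := by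
        calc |P x t + P x t'| ≤ |P x t| + |P x t'| := abs_add_le _ _
          _ ≤ 2 * Mp := by linarith
      calc |(h x t' - h x t - (t' - t) * ht x t) * (P x t + P x t')
            + (t' - t) * ht x t * (P x t' - P x t)|
          ≤ |(h x t' - h x t - (t' - t) * ht x t) * (P x t + P x t')|
            + |(t' - t) * ht x t * (P x t' - P x t)| := abs_add_le _ _
        _ = |h x t' - h x t - (t' - t) * ht x t| * |P x t + P x t'|
            + |t' - t| * |ht x t| * |P x t' - P x t| := by
            rw [abs_mul, abs_mul, abs_mul]
        _ ≤ (ε1 * |t' - t|) * (2 * Mp) + |t' - t| * Mt * ε2 := by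
            have b1 : |h x t' - h x t - (t' - t) * ht x t| * |P x t + P x t'|
                ≤ (ε1 * |t' - t|) * (2 * Mp) :=
              mul_le_mul hA hPP (abs_nonneg _) (by positivity)
            have b2 : |t' - t| * |ht x t| * |P x t' - P x t|
                ≤ |t' - t| * Mt * ε2 := by
              apply mul_le_mul _ hPd (abs_nonneg _)
              · positivity
              · exact mul_le_mul le_rfl hht (abs_nonneg _) (abs_nonneg _)
            linarith
        _ = |t' - t| * (2 * ε1 * Mp + Mt * ε2) := by ring
    obtain ⟨z, hzdef⟩ : ∃ z : ℝ, z = ∫ x in (-a)..a, ((h x t' - h x t) * (P x t + P x t')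
        - (2*(t'-t)) * (ht x t * P x t)) := ⟨_, rfl⟩
    rw [hEq, ← hzdef]
    have hInt : ‖z‖ ≤ (|t' - t| * (2 * ε1 * Mp + Mt * ε2)) * |a - (-a)| := by
      rw [hzdef]
      exact intervalIntegral.norm_integral_le_of_norm_le_const hbound
    have haa2 : |a - (-a)| = 2 * a := by rw [abs_of_pos (by linarith)]; ring
    rw [haa2] at hInt
    have hnz : ‖-(1/2) * z‖ = (1/2) * ‖z‖ := by
      rw [norm_mul]
      norm_num
    rw [hnz]
    calc (1/2) * ‖z‖
        ≤ (1/2) * ((|t' - t| * (2 * ε1 * Mp + Mt * ε2)) * (2 * a)) := by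
          apply mul_le_mul_of_nonneg_left hInt
          norm_num
      _ = |t' - t| * (a * (2 * ε1 * Mp) + a * (Mt * ε2)) := by ring
      _ ≤ |t' - t| * C :=
          mul_le_mul_of_nonneg_left (by linarith [key1, key2]) (abs_nonneg _)
      _ = C * ‖t' - t‖ := by rw [Real.norm_eq_abs]; ring
  -- continuity of E and J
  have contE : ContinuousOn E (Set.Icc 0 T) := by
    have hF : ContinuousOn (fun p : ℝ × ℝ =>
        (hx p.1 p.2)^2 - (h p.1 p.2)^2 - (4 / (3 * S)) * p.1 * h p.1 p.2)
        (Set.univ ×ˢ Set.Icc 0 T) :=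
      ((hsol.cont_hx.pow 2).sub (hsol.cont_h.pow 2)).sub
        (((continuous_const.mul continuous_fst).continuousOn).mul hsol.cont_h)
    simp only [hEdef]
    exact continuousOn_const.mul (param_cont a T ha _ hF)
  have contJ : ContinuousOn J (Set.Icc 0 T) := by
    have hF : ContinuousOn (fun p : ℝ × ℝ =>
        ((h p.1 p.2) ^ 3 + ε) * (hx p.1 p.2 + hxxx p.1 p.2 + 2 / (3 * S))^2)
        (Set.univ ×ˢ Set.Icc 0 T) :=
      ((hsol.cont_h.pow 3).add continuousOn_const).mul
        (((hsol.cont_hx.add hsol.cont_hxxx).add continuousOn_const).pow 2)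
    simp only [hJdef]
    exact param_cont a T ha _ hF
  -- final assembly
  obtain ⟨hT'0, hT'T⟩ := hT'
  have hIccsub : Set.Icc (0:ℝ) T' ⊆ Set.Icc 0 T := Set.Icc_subset_Icc le_rfl hT'T
  have hder : ∀ t ∈ Set.Ioo (0:ℝ) T', HasDerivWithinAt E (-(S * J t)) (Set.Ioi t) t := by
    intro t htI
    have htIoo : t ∈ Set.Ioo (0:ℝ) T := ⟨htI.1, lt_of_lt_of_le htI.2 hT'T⟩
    have hd := hEderiv t htIoo
    rw [hI t ⟨htIoo.1.le, htIoo.2.le⟩] at hd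
    exact hd.hasDerivWithinAt
  have hintSJ : IntervalIntegrable (fun t => -(S * J t)) volume 0 T' := by
    apply ContinuousOn.intervalIntegrable
    apply ContinuousOn.mono ((continuousOn_const.mul contJ).neg)
    rw [Set.uIcc_of_le hT'0]
    exact hIccsub
  have hftc := intervalIntegral.integral_eq_sub_of_hasDeriv_right_of_le hT'0
    (contE.mono hIccsub) hder hintSJ
  have hneg : (∫ t in (0:ℝ)..T', -(S * J t)) = -(S * ∫ t in (0:ℝ)..T', J t) := by
    rw [intervalIntegral.integral_neg, intervalIntegral.integral_const_mul]
  rw [hneg] at hftc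
  show E T' + S * (∫ t in (0:ℝ)..T', J t) = E 0
  linarith [hftc]
end

section
/- Assume 0 < a < π/2. There exists a constant A* > 0, depending only on a, S, 𝓔̃(h(·,0)) = (1/2)·∫_{−a}^{a} ( h_x(x,0)² − h(x,0)² − (4/(3S))·x·h(x,0) ) dx, and M = ∫_{−a}^{a} h(x,0) dx, such that every nonnegative classical periodic solution h of the regularized Model II equation on [0,T] satisfying the additional boundary condition obeys ∫_{−a}^{a} h_x(x,t)² dx ≤ A* and ∫_{−a}^{a} h(x,t)² dx ≤ (2a/π)²·A* + M²/(2a) for all t ∈ [0,T]. In particular, the H¹(Ω) norm of h(·,t) is bounded uniformly in t, T, and ε > 0. -/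
open Set MeasureTheory intervalIntegral Filter Topology

lemma poincare_dirichlet {L : ℝ} (hL : 0 < L) (c : ℝ) (f f' : ℝ → ℝ)
    (hf : ∀ x, HasDerivAt f (f' x) x) (hf' : Continuous f')
    (h0 : f c = 0) (h1 : f (c + L) = 0) :
    ∫ x in c..(c + L), (f x)^2 ≤ (L / Real.pi)^2 * ∫ x in c..(c + L), (f' x)^2 := by
  have hfc : Continuous f := continuous_iff_continuousAt.2 fun x => (hf x).continuousAt
  have hπ := Real.pi_pos
  set k : ℝ := Real.pi / L with hk_def
  have hk : 0 < k := div_pos hπ hL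
  have hkL : k * L = Real.pi := div_mul_cancel₀ _ (ne_of_gt hL)
  set B : ℝ → ℝ := fun x => k * Real.cos (k*(x-c)) * (f x)^2 / Real.sin (k*(x-c)) with hB_def
  set W : ℝ → ℝ := fun x => (f' x)^2 - k^2 * (f x)^2
      - (f' x - k * (f x) * (Real.cos (k*(x-c)) / Real.sin (k*(x-c))))^2 with hW_def
  set u : ℝ → ℝ := fun x => (f' x)^2 - k^2 * (f x)^2 with hu_def
  have hu_cont : Continuous u := by
    apply Continuous.sub (hf'.pow 2) (continuous_const.mul (hfc.pow 2))
  have hsin_pos : ∀ x ∈ Ioo c (c+L), 0 < Real.sin (k*(x-c)) := by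
    intro x hx
    apply Real.sin_pos_of_pos_of_lt_pi
    · exact mul_pos hk (by linarith [hx.1])
    · have h2 : k*(x-c) < k*L := by
        apply mul_lt_mul_of_pos_left _ hk; linarith [hx.2]
      linarith [hkL ▸ h2]
  have hds : ∀ x : ℝ, HasDerivAt (fun y => Real.sin (k*(y-c))) (k * Real.cos (k*(x-c))) x := by
    intro x
    have h1 : HasDerivAt (fun y : ℝ => k*(y-c)) k x := by
      simpa using ((hasDerivAt_id x).sub_const c).const_mul k
    simpa [mul_comm, Function.comp_def] using (Real.hasDerivAt_sin (k*(x-c))).comp x h1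
  have hdc : ∀ x : ℝ, HasDerivAt (fun y => Real.cos (k*(y-c))) (-(k * Real.sin (k*(x-c)))) x := by
    intro x
    have h1 : HasDerivAt (fun y : ℝ => k*(y-c)) k x := by
      simpa using ((hasDerivAt_id x).sub_const c).const_mul k
    have := (Real.hasDerivAt_cos (k*(x-c))).comp x h1
    simpa [mul_comm, Function.comp_def] using this
  have hderivB : ∀ x ∈ Ioo c (c+L), HasDerivAt B (W x) x := by
    intro x hx
    have hs := hsin_pos x hx
    have hnum : HasDerivAt (fun y => k * Real.cos (k*(y-c)) * (f y)^2)
        ((k * -(k * Real.sin (k*(x-c)))) * (f x)^2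
          + (k * Real.cos (k*(x-c))) * (2 * f x ^ 1 * f' x)) x :=
      ((hdc x).const_mul k).mul ((hf x).pow 2)
    have hraw := hnum.div (hds x) (ne_of_gt hs)
    replace hraw : HasDerivAt B _ x := hraw
    convert hraw using 1
    have hsne := ne_of_gt hs
    simp only [hW_def]
    field_simp
    ring
  -- primitive
  set Φ : ℝ → ℝ := fun y => ∫ x in c..y, u x with hΦ_def
  have hΦcont : Continuous Φ :=
    intervalIntegral.continuous_primitive (fun a b => hu_cont.intervalIntegrable a b) c
  -- key inequality for each small δ
  have key : ∀ δ ∈ Ioo (0:ℝ) (L/2),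
      B (c+L-δ) - B (c+δ) ≤ Φ (c+L-δ) - Φ (c+δ) := by
    intro δ hδ
    obtain ⟨hδ0, hδL⟩ := hδ
    have hle : c + δ ≤ c + L - δ := by linarith
    have hsub : Icc (c+δ) (c+L-δ) ⊆ Ioo c (c+L) := by
      intro x hx; exact ⟨by linarith [hx.1], by linarith [hx.2]⟩
    have hsin_ne : ∀ x ∈ Icc (c+δ) (c+L-δ), Real.sin (k*(x-c)) ≠ 0 :=
      fun x hx => ne_of_gt (hsin_pos x (hsub hx))
    have hWcont : ContinuousOn W (Icc (c+δ) (c+L-δ)) := by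
      apply ContinuousOn.sub (hu_cont.continuousOn)
      apply ContinuousOn.pow
      apply ContinuousOn.sub hf'.continuousOn
      apply ContinuousOn.mul (continuous_const.mul hfc).continuousOn
      exact ContinuousOn.div
        (Real.continuous_cos.comp (continuous_const.mul (continuous_id.sub continuous_const))).continuousOn
        (Real.continuous_sin.comp (continuous_const.mul (continuous_id.sub continuous_const))).continuousOn
        hsin_ne
    have hWint : IntervalIntegrable W volume (c+δ) (c+L-δ) :=
      (hWcont.mono (by rw [uIcc_of_le hle])).intervalIntegrable
    have huint : IntervalIntegrable u volume (c+δ) (c+L-δ) := hu_cont.intervalIntegrable _ _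
    have hftc : ∫ x in (c+δ)..(c+L-δ), W x = B (c+L-δ) - B (c+δ) := by
      apply integral_eq_sub_of_hasDerivAt _ hWint
      intro x hx
      rw [uIcc_of_le hle] at hx
      exact hderivB x (hsub hx)
    have hmono : ∫ x in (c+δ)..(c+L-δ), W x ≤ ∫ x in (c+δ)..(c+L-δ), u x := by
      apply intervalIntegral.integral_mono_on hle hWint huint
      intro x hx
      have : 0 ≤ (f' x - k * (f x) * (Real.cos (k*(x-c)) / Real.sin (k*(x-c))))^2 := sq_nonneg _
      simp only [hW_def, hu_def]; linarith
    have hΦdiff : Φ (c+L-δ) - Φ (c+δ) = ∫ x in (c+δ)..(c+L-δ), u x := by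
      have hadj := intervalIntegral.integral_add_adjacent_intervals
        (hu_cont.intervalIntegrable c (c+δ)) huint
      simp only [hΦ_def]
      linarith [hadj]
    rw [hΦdiff, ← hftc]; exact hmono
  -- limits
  have hslope_l : Tendsto (fun δ : ℝ => f (c+δ) / δ) (𝓝[>] 0) (𝓝 (f' c)) := by
    have hs := hasDerivAt_iff_tendsto_slope.1 (hf c)
    have hmap : Tendsto (fun δ : ℝ => c + δ) (𝓝[>] (0:ℝ)) (𝓝[≠] c) := by
      apply tendsto_nhdsWithin_of_tendsto_nhds_of_eventually_within
      · have h : Tendsto (fun δ : ℝ => c + δ) (𝓝 0) (𝓝 (c + 0)) :=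
          Filter.Tendsto.const_add c tendsto_id
        simpa using h.mono_left nhdsWithin_le_nhds
      · filter_upwards [self_mem_nhdsWithin] with δ (hδ : (0:ℝ) < δ)
        simp; linarith
    have := hs.comp hmap
    refine this.congr (fun δ => ?_)
    simp [slope_def_field, h0]
  have hslope_r : Tendsto (fun δ : ℝ => f (c+L-δ) / δ) (𝓝[>] 0) (𝓝 (-(f' (c+L)))) := by
    have hs := hasDerivAt_iff_tendsto_slope.1 (hf (c+L))
    have hmap : Tendsto (fun δ : ℝ => c + L - δ) (𝓝[>] (0:ℝ)) (𝓝[≠] (c+L)) := by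
      apply tendsto_nhdsWithin_of_tendsto_nhds_of_eventually_within
      · have h : Tendsto (fun δ : ℝ => c + L - δ) (𝓝 0) (𝓝 (c + L - 0)) :=
          tendsto_const_nhds.sub tendsto_id
        simpa using h.mono_left nhdsWithin_le_nhds
      · filter_upwards [self_mem_nhdsWithin] with δ (hδ : (0:ℝ) < δ)
        simp; intro habs; linarith
    have h2 := (hs.comp hmap).neg
    refine h2.congr (fun δ => ?_)
    have hden : c + L - δ - (c + L) = -δ := by ring
    simp only [Function.comp_apply, slope_def_field, h1, hden, sub_zero, div_neg, neg_neg]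
  have hsinq : Tendsto (fun δ : ℝ => δ^2 / Real.sin (k*δ)) (𝓝[>] 0) (𝓝 0) := by
    have hd : HasDerivAt (fun y : ℝ => Real.sin (k*y)) k 0 := by
      have h1' : HasDerivAt (fun y : ℝ => k*y) k 0 := by
        simpa using (hasDerivAt_id (0:ℝ)).const_mul k
      have h2 := (Real.hasDerivAt_sin (k*0)).comp 0 h1'
      simpa [Function.comp_def] using h2
    have hs := hasDerivAt_iff_tendsto_slope.1 hd
    have hs' : Tendsto (fun δ : ℝ => Real.sin (k*δ) / δ) (𝓝[>] 0) (𝓝 k) := by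
      have hmono : (𝓝[>] (0:ℝ)) ≤ (𝓝[≠] (0:ℝ)) :=
        nhdsWithin_mono 0 (fun x hx => ne_of_gt hx)
      refine (hs.mono_left hmono).congr (fun δ => ?_)
      simp [slope_def_field]
    have hk0 : k ≠ 0 := ne_of_gt hk
    have hid : Tendsto (fun δ : ℝ => δ) (𝓝[>] (0:ℝ)) (𝓝 0) :=
      tendsto_id.mono_left nhdsWithin_le_nhds
    have hdiv := hid.div hs' hk0
    rw [zero_div] at hdiv
    refine hdiv.congr (fun δ => ?_)
    simp only [Pi.div_apply]
    rw [div_div_eq_mul_div, ← sq]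
  have hsmall : Ioo (0:ℝ) (L/2) ∈ 𝓝[>] (0:ℝ) :=
    Ioo_mem_nhdsGT_of_mem ⟨le_refl _, half_pos hL⟩
  have hsin_pos' : ∀ δ ∈ Ioo (0:ℝ) (L/2), 0 < Real.sin (k*δ) := by
    intro δ hδ
    apply Real.sin_pos_of_pos_of_lt_pi (mul_pos hk hδ.1)
    have : k * δ < k * L := mul_lt_mul_of_pos_left (by linarith [hδ.2]) hk
    linarith [hkL ▸ this]
  have hBl : Tendsto (fun δ : ℝ => B (c+δ)) (𝓝[>] 0) (𝓝 0) := by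
    have hcos : Tendsto (fun δ : ℝ => Real.cos (k*δ)) (𝓝[>] (0:ℝ)) (𝓝 (Real.cos (k*0))) :=
      ((Real.continuous_cos.comp (continuous_const.mul continuous_id)).tendsto 0).mono_left
        nhdsWithin_le_nhds
    have hG : Tendsto (fun δ : ℝ => (k * Real.cos (k*δ)) * ((f (c+δ)/δ)^2 * (δ^2 / Real.sin (k*δ))))
        (𝓝[>] 0) (𝓝 ((k * Real.cos (k*0))*((f' c)^2 * 0))) :=
      (hcos.const_mul k).mul ((hslope_l.pow 2).mul hsinq)
    have hG0 : ((k * Real.cos (k*0))*((f' c)^2 * 0)) = 0 := by ring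
    rw [hG0] at hG
    refine hG.congr' ?_
    filter_upwards [hsmall] with δ hδ
    have hδne : δ ≠ 0 := ne_of_gt hδ.1
    have hsne : Real.sin (k*δ) ≠ 0 := ne_of_gt (hsin_pos' δ hδ)
    simp only [hB_def]
    have hcc : c + δ - c = δ := by ring
    rw [hcc]
    field_simp
  have hBr : Tendsto (fun δ : ℝ => B (c+L-δ)) (𝓝[>] 0) (𝓝 0) := by
    have hcos : Tendsto (fun δ : ℝ => Real.cos (k*δ)) (𝓝[>] (0:ℝ)) (𝓝 (Real.cos (k*0))) :=
      ((Real.continuous_cos.comp (continuous_const.mul continuous_id)).tendsto 0).mono_left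
        nhdsWithin_le_nhds
    have hG : Tendsto (fun δ : ℝ => (k * -Real.cos (k*δ)) * ((f (c+L-δ)/δ)^2 * (δ^2 / Real.sin (k*δ))))
        (𝓝[>] 0) (𝓝 ((k * -Real.cos (k*0))*((-(f' (c+L)))^2 * 0))) :=
      (hcos.neg.const_mul k).mul ((hslope_r.pow 2).mul hsinq)
    have hG0 : ((k * -Real.cos (k*0))*((-(f' (c+L)))^2 * 0)) = 0 := by ring
    rw [hG0] at hG
    refine hG.congr' ?_
    filter_upwards [hsmall] with δ hδ
    have hδne : δ ≠ 0 := ne_of_gt hδ.1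
    have hsne : Real.sin (k*δ) ≠ 0 := ne_of_gt (hsin_pos' δ hδ)
    simp only [hB_def]
    have hcc : c + L - δ - c = L - δ := by ring
    have hkk : k * (L - δ) = Real.pi - k * δ := by rw [mul_sub, hkL]
    rw [hcc, hkk, Real.cos_pi_sub, Real.sin_pi_sub]
    field_simp
  have hkey2 : 0 ≤ Φ (c+L) - Φ c := by
    have t1 : Tendsto (fun δ : ℝ => Φ (c+L-δ)) (𝓝[>] (0:ℝ)) (𝓝 (Φ (c+L))) := by
      have h : Tendsto (fun δ : ℝ => c + L - δ) (𝓝 (0:ℝ)) (𝓝 (c + L - 0)) :=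
        tendsto_const_nhds.sub tendsto_id
      rw [sub_zero] at h
      exact (hΦcont.tendsto _).comp (h.mono_left nhdsWithin_le_nhds)
    have t2 : Tendsto (fun δ : ℝ => Φ (c+δ)) (𝓝[>] (0:ℝ)) (𝓝 (Φ (c+0))) := by
      have h : Tendsto (fun δ : ℝ => c + δ) (𝓝 (0:ℝ)) (𝓝 (c + 0)) :=
        tendsto_const_nhds.add tendsto_id
      exact (hΦcont.tendsto _).comp (h.mono_left nhdsWithin_le_nhds)
    rw [add_zero] at t2
    have hg := ((t1.sub t2).sub (hBr.sub hBl))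
    simp only [sub_zero] at hg
    apply ge_of_tendsto hg
    filter_upwards [hsmall] with δ hδ
    linarith [key δ hδ]
  have hΦc : Φ c = 0 := intervalIntegral.integral_same
  have hint : Φ (c+L) = (∫ x in c..(c+L), (f' x)^2) - k^2 * ∫ x in c..(c+L), (f x)^2 := by
    simp only [hΦ_def, hu_def]
    rw [intervalIntegral.integral_sub (f := fun x => f' x ^ 2) (g := fun x => k^2 * f x ^ 2) ((hf'.pow 2).intervalIntegrable _ _)
      ((continuous_const.mul (hfc.pow 2)).intervalIntegrable _ _),
      intervalIntegral.integral_const_mul]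
  have hI : k^2 * (∫ x in c..(c+L), (f x)^2) ≤ ∫ x in c..(c+L), (f' x)^2 := by
    rw [hΦc, hint] at hkey2; linarith
  have hcoef : (L/Real.pi)^2 * k^2 = 1 := by
    rw [hk_def]; field_simp
  calc ∫ x in c..(c+L), (f x)^2 = (L/Real.pi)^2 * (k^2 * ∫ x in c..(c+L), (f x)^2) := by
        rw [← mul_assoc, hcoef, one_mul]
    _ ≤ (L/Real.pi)^2 * ∫ x in c..(c+L), (f' x)^2 :=
        mul_le_mul_of_nonneg_left hI (sq_nonneg _)

lemma exists_zero_of_integral_zero {a : ℝ} (ha : 0 < a) (f : ℝ → ℝ) (hfc : Continuous f)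
    (hmean : ∫ x in (-a)..a, f x = 0) : ∃ x0 ∈ Icc (-a) a, f x0 = 0 := by
  by_contra hno
  push_neg at hno
  have hab : -a < a := by linarith
  have hsign : (∀ x ∈ Icc (-a) a, 0 < f x) ∨ (∀ x ∈ Icc (-a) a, f x < 0) := by
    by_contra hcon
    push_neg at hcon
    obtain ⟨⟨x1, hx1, hx1'⟩, ⟨x2, hx2, hx2'⟩⟩ := hcon
    have h1 : f x1 < 0 := lt_of_le_of_ne hx1' (hno x1 hx1)
    have h2 : 0 < f x2 := lt_of_le_of_ne (le_of_not_gt (fun h => (hno x2 hx2) (le_antisymm (le_of_lt h) hx2' ▸ rfl))) (Ne.symm (hno x2 hx2))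
    have hsub : uIcc x1 x2 ⊆ Icc (-a) a := uIcc_subset_Icc hx1 hx2
    have h0mem : (0:ℝ) ∈ uIcc (f x1) (f x2) := by
      rw [mem_uIcc]; left; exact ⟨le_of_lt h1, le_of_lt h2⟩
    obtain ⟨x0, hx0, hfx0⟩ := intermediate_value_uIcc (hfc.continuousOn) h0mem
    exact hno x0 (hsub hx0) hfx0
  rcases hsign with hpos | hneg
  · have : 0 < ∫ x in (-a)..a, f x := by
      apply intervalIntegral_pos_of_pos_on (hfc.intervalIntegrable _ _)
      · exact fun x hx => hpos x ⟨le_of_lt hx.1, le_of_lt hx.2⟩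
      · exact hab
    linarith [hmean ▸ this]
  · have : 0 < ∫ x in (-a)..a, -f x := by
      apply intervalIntegral_pos_of_pos_on ((hfc.neg).intervalIntegrable _ _)
      · exact fun x hx => by simpa using hneg x ⟨le_of_lt hx.1, le_of_lt hx.2⟩
      · exact hab
    rw [intervalIntegral.integral_neg, hmean] at this
    simp at this

lemma poincare_periodic {a : ℝ} (ha : 0 < a) (f f' : ℝ → ℝ)
    (hf : ∀ x, HasDerivAt f (f' x) x) (hf' : Continuous f')
    (hper : ∀ x, f (x + 2*a) = f x)
    (hmean : ∫ x in (-a)..a, f x = 0) :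
    ∫ x in (-a)..a, (f x)^2 ≤ (2*a/Real.pi)^2 * ∫ x in (-a)..a, (f' x)^2 := by
  have hfc : Continuous f := continuous_iff_continuousAt.2 fun x => (hf x).continuousAt
  obtain ⟨x0, _, hx0⟩ := exists_zero_of_integral_zero ha f hfc hmean
  have hper' : ∀ x, f' (x + 2*a) = f' x := by
    intro x
    have h1 : HasDerivAt (fun y => f (y + 2*a)) (f' (x + 2*a)) x := by
      have := (hf (x + 2*a)).comp x ((hasDerivAt_id x).add_const (2*a))
      simpa [Function.comp_def] using this
    have hfun : (fun y => f (y + 2*a)) = f := funext (fun y => hper y)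
    rw [hfun] at h1
    exact h1.unique (hf x)
  have hper2 : Function.Periodic (fun x => (f x)^2) (2*a) := fun x => by simp [hper x]
  have hper2' : Function.Periodic (fun x => (f' x)^2) (2*a) := fun x => by simp [hper' x]
  have hshift : ∫ x in x0..(x0 + 2*a), (f x)^2 = ∫ x in (-a)..a, (f x)^2 := by
    have h := hper2.intervalIntegral_add_eq x0 (-a)
    rw [show -a + 2*a = a by ring] at h
    exact h
  have hshift' : ∫ x in x0..(x0 + 2*a), (f' x)^2 = ∫ x in (-a)..a, (f' x)^2 := by
    have h := hper2'.intervalIntegral_add_eq x0 (-a)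
    rw [show -a + 2*a = a by ring] at h
    exact h
  have hP := poincare_dirichlet (L := 2*a) (by linarith) x0 f f' hf hf' hx0
    (by rw [hper x0]; exact hx0)
  rw [hshift, hshift'] at hP
  exact hP

lemma poincare_mean {a : ℝ} (ha : 0 < a) (g g' : ℝ → ℝ) (m : ℝ)
    (hg : ∀ x, HasDerivAt g (g' x) x) (hg' : Continuous g')
    (hper : ∀ x, g (x + 2*a) = g x)
    (hmean : ∫ x in (-a)..a, g x = m) :
    ∫ x in (-a)..a, (g x)^2
      ≤ (2*a/Real.pi)^2 * (∫ x in (-a)..a, (g' x)^2) + m^2/(2*a) := by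
  have hgc : Continuous g := continuous_iff_continuousAt.2 fun x => (hg x).continuousAt
  set c : ℝ := m / (2*a) with hc_def
  set f : ℝ → ℝ := fun x => g x - c with hf_def
  have hfd : ∀ x, HasDerivAt f (g' x) x := fun x => (hg x).sub_const c
  have hfper : ∀ x, f (x + 2*a) = f x := fun x => by simp [hf_def, hper x]
  have hfmean : ∫ x in (-a)..a, f x = 0 := by
    rw [hf_def]
    rw [intervalIntegral.integral_sub (hgc.intervalIntegrable _ _)
      (intervalIntegrable_const), hmean, intervalIntegral.integral_const]
    simp only [hc_def, smul_eq_mul]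
    have h2a : (2*a) ≠ 0 := by positivity
    field_simp
    ring
  have hP := poincare_periodic ha f g' hfd hg' hfper hfmean
  have hexp : ∫ x in (-a)..a, (f x)^2
      = (∫ x in (-a)..a, (g x)^2) - m^2/(2*a) := by
    have h1 : ∀ x, (f x)^2 = (g x)^2 - 2*c*(g x) + c^2 := fun x => by
      simp only [hf_def]; ring
    rw [intervalIntegral.integral_congr (g := fun x => (g x)^2 - 2*c*(g x) + c^2)
      (fun x _ => h1 x)]
    rw [intervalIntegral.integral_add (f := fun x => g x ^ 2 - 2*c*g x) (g := fun _ => c^2) (((hgc.pow 2).sub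
      ((continuous_const.mul hgc))).intervalIntegrable _ _) intervalIntegrable_const,
      intervalIntegral.integral_sub (f := fun x => g x ^ 2) (g := fun x => 2*c*g x) ((hgc.pow 2).intervalIntegrable _ _)
      ((continuous_const.mul hgc).intervalIntegrable _ _),
      intervalIntegral.integral_const_mul, hmean, intervalIntegral.integral_const]
    simp only [hc_def, smul_eq_mul]
    have h2a : (2*a) ≠ 0 := by positivity
    field_simp
    ring
  rw [hexp] at hP
  linarith

lemma cont_slice_x {u : ℝ → ℝ → ℝ} {T : ℝ}
    (hu : ContinuousOn (fun p : ℝ × ℝ => u p.1 p.2) (Set.univ ×ˢ Set.Icc 0 T))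
    {t : ℝ} (htt : t ∈ Set.Icc (0:ℝ) T) : Continuous fun x => u x t := by
  rw [← continuousOn_univ]
  exact hu.comp (continuous_id.prodMk continuous_const).continuousOn
    (fun x _ => by simp [htt])

lemma cont_slice_t {u : ℝ → ℝ → ℝ} {T : ℝ}
    (hu : ContinuousOn (fun p : ℝ × ℝ => u p.1 p.2) (Set.univ ×ˢ Set.Icc 0 T))
    (x : ℝ) : ContinuousOn (fun s => u x s) (Set.Icc 0 T) := by
  exact hu.comp (continuous_const.prodMk continuous_id).continuousOn
    (fun s hs => by simp [hs])

lemma bound_of_cont {u : ℝ → ℝ → ℝ} {a T : ℝ}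
    (hu : ContinuousOn (fun p : ℝ × ℝ => u p.1 p.2) (Set.univ ×ˢ Set.Icc 0 T)) :
    ∃ C : ℝ, 0 ≤ C ∧ ∀ x ∈ Set.Icc (-a) a, ∀ t ∈ Set.Icc (0:ℝ) T, |u x t| ≤ C := by
  have hK : IsCompact (Set.Icc (-a) a ×ˢ Set.Icc (0:ℝ) T) :=
    (isCompact_Icc).prod (isCompact_Icc)
  obtain ⟨C, hC⟩ := hK.exists_bound_of_continuousOn
    (hu.mono (Set.prod_mono (Set.subset_univ _) (le_refl _)))
  refine ⟨max C 0, le_max_right _ _, fun x hxm t htm => ?_⟩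
  have := hC (x, t) (Set.mk_mem_prod hxm htm)
  simp only [Real.norm_eq_abs] at this
  exact le_trans this (le_max_left _ _)

/-- Dominated-convergence differentiation of a parametric interval integral, with
difference-quotient identity supplied externally. -/
lemma hasDerivAt_param_integral {a T : ℝ} (ha : 0 < a) (hT : 0 < T)
    {u ut v : ℝ → ℝ → ℝ} {G : ℝ → ℝ} {t₀ : ℝ} (ht₀ : t₀ ∈ Set.Ioo 0 T)
    (hu_cont : ContinuousOn (fun p : ℝ × ℝ => u p.1 p.2) (Set.univ ×ˢ Set.Icc 0 T))
    (hut : ∀ x ∈ Set.Icc (-a) a, ∀ t ∈ Set.Icc (0:ℝ) T,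
      HasDerivWithinAt (fun s => u x s) (ut x t) (Set.Icc 0 T) t)
    (hut_cont : ContinuousOn (fun p : ℝ × ℝ => ut p.1 p.2) (Set.univ ×ˢ Set.Icc 0 T))
    (hv_cont : ContinuousOn (fun p : ℝ × ℝ => v p.1 p.2) (Set.univ ×ˢ Set.Icc 0 T))
    (key : ∀ s ∈ Set.Icc (0:ℝ) T, G s - G t₀ = ∫ x in (-a)..a, (u x s - u x t₀) * v x s) :
    HasDerivAt G (∫ x in (-a)..a, ut x t₀ * v x t₀) t₀ := by
  have ht₀' : t₀ ∈ Set.Icc (0:ℝ) T := Set.mem_Icc_of_Ioo ht₀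
  have hIccmem : Set.Icc (0:ℝ) T ∈ 𝓝 t₀ := Icc_mem_nhds ht₀.1 ht₀.2
  obtain ⟨C1, hC1n, hC1⟩ := bound_of_cont (a := a) hut_cont
  obtain ⟨C2, hC2n, hC2⟩ := bound_of_cont (a := a) hv_cont
  rw [hasDerivAt_iff_tendsto_slope]
  have hsub : Set.uIoc (-a) a ⊆ Set.Icc (-a) a := by
    rw [Set.uIoc_of_le (by linarith : -a ≤ a)]
    exact Set.Ioc_subset_Icc_self
  have hmem : ∀ᶠ s in 𝓝[≠] t₀, s ∈ Set.Icc (0:ℝ) T ∧ s ≠ t₀ := by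
    filter_upwards [nhdsWithin_le_nhds hIccmem, self_mem_nhdsWithin] with s h1 h2
    exact ⟨h1, h2⟩
  have hDCT : Tendsto (fun s => ∫ x in (-a)..a, ((u x s - u x t₀)/(s - t₀)) * v x s)
      (𝓝[≠] t₀) (𝓝 (∫ x in (-a)..a, ut x t₀ * v x t₀)) := by
    apply intervalIntegral.tendsto_integral_filter_of_dominated_convergence
      (fun _ => C1 * C2)
    · filter_upwards [hmem] with s hs
      apply Continuous.aestronglyMeasurable
      exact (((cont_slice_x hu_cont hs.1).sub (cont_slice_x hu_cont ht₀')).div_const _).mul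
        (cont_slice_x hv_cont hs.1)
    · filter_upwards [hmem] with s hs
      apply Filter.Eventually.of_forall
      intro x hx
      have hxm : x ∈ Set.Icc (-a) a := hsub hx
      have hmvt : ‖u x s - u x t₀‖ ≤ C1 * ‖s - t₀‖ := by
        apply Convex.norm_image_sub_le_of_norm_hasDerivWithin_le
          (fun τ hτ => hut x hxm τ hτ)
          (fun τ hτ => by simpa [Real.norm_eq_abs] using hC1 x hxm τ hτ)
          (convex_Icc 0 T) ht₀' hs.1
      have hq : |(u x s - u x t₀)/(s - t₀)| ≤ C1 := by
        rw [abs_div]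
        rw [div_le_iff₀ (by simpa [abs_pos, sub_ne_zero] using hs.2)]
        simpa [Real.norm_eq_abs] using hmvt
      have hv : |v x s| ≤ C2 := hC2 x hxm s hs.1
      calc ‖((u x s - u x t₀)/(s - t₀)) * v x s‖
          = |(u x s - u x t₀)/(s - t₀)| * |v x s| := by
            rw [Real.norm_eq_abs, abs_mul]
        _ ≤ C1 * C2 := mul_le_mul hq hv (abs_nonneg _) hC1n
    · exact intervalIntegrable_const
    · apply Filter.Eventually.of_forall
      intro x hx
      have hxm : x ∈ Set.Icc (-a) a := hsub hx
      have hd : HasDerivAt (fun s => u x s) (ut x t₀) t₀ :=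
        (hut x hxm t₀ ht₀').hasDerivAt hIccmem
      have t1 : Tendsto (fun s => (u x s - u x t₀)/(s - t₀)) (𝓝[≠] t₀) (𝓝 (ut x t₀)) := by
        refine (hasDerivAt_iff_tendsto_slope.1 hd).congr (fun s => ?_)
        simp [slope_def_field]
      have t2 : Tendsto (fun s => v x s) (𝓝[≠] t₀) (𝓝 (v x t₀)) := by
        have hvc := (cont_slice_t hv_cont x) t₀ ht₀'
        have : Tendsto (fun s => v x s) (𝓝 t₀) (𝓝 (v x t₀)) := by
          rw [← nhdsWithin_eq_nhds.2 hIccmem]; exact hvc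
        exact this.mono_left nhdsWithin_le_nhds
      exact t1.mul t2
  refine hDCT.congr' ?_
  filter_upwards [hmem] with s hs
  have hkey := key s hs.1
  rw [slope_def_field, hkey]
  rw [show (∫ x in (-a)..a, ((u x s - u x t₀)/(s - t₀)) * v x s)
      = ∫ x in (-a)..a, ((u x s - u x t₀) * v x s)/(s - t₀) from
    intervalIntegral.integral_congr (fun x _ => by ring)]
  rw [intervalIntegral.integral_div]

/-- Continuity of a parametric interval integral. -/
lemma continuousOn_param_integral {a T : ℝ} (ha : 0 < a) {u : ℝ → ℝ → ℝ}
    (hu : ContinuousOn (fun p : ℝ × ℝ => u p.1 p.2) (Set.univ ×ˢ Set.Icc 0 T)) :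
    ContinuousOn (fun t => ∫ x in (-a)..a, u x t) (Set.Icc 0 T) := by
  obtain ⟨C, hCn, hC⟩ := bound_of_cont (a := a) hu
  have hsub : Set.uIoc (-a) a ⊆ Set.Icc (-a) a := by
    rw [Set.uIoc_of_le (by linarith : -a ≤ a)]
    exact Set.Ioc_subset_Icc_self
  intro t₀ ht₀
  have hDCT : Tendsto (fun s => ∫ x in (-a)..a, u x s)
      (𝓝[Set.Icc (0:ℝ) T] t₀) (𝓝 (∫ x in (-a)..a, u x t₀)) := by
    apply intervalIntegral.tendsto_integral_filter_of_dominated_convergence (fun _ => C)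
    · filter_upwards [self_mem_nhdsWithin] with s hs
      exact (cont_slice_x hu hs).aestronglyMeasurable
    · filter_upwards [self_mem_nhdsWithin] with s hs
      exact Filter.Eventually.of_forall
        (fun x hx => by simpa [Real.norm_eq_abs] using hC x (hsub hx) s hs)
    · exact intervalIntegrable_const
    · exact Filter.Eventually.of_forall
        (fun x _ => (cont_slice_t hu x) t₀ ht₀)
  exact hDCT

lemma modelII_core (a S ε T : ℝ) (h hx hxx hxxx ht : ℝ → ℝ → ℝ)
    (ha : 0 < a) (hT : 0 < T) (hS : 0 < S) (hε : 0 < ε)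
    (per : ∀ x t, h (x + 2 * a) t = h x t)
    (ch : ContinuousOn (fun p : ℝ × ℝ => h p.1 p.2) (Set.univ ×ˢ Set.Icc 0 T))
    (chx : ContinuousOn (fun p : ℝ × ℝ => hx p.1 p.2) (Set.univ ×ˢ Set.Icc 0 T))
    (chxx : ContinuousOn (fun p : ℝ × ℝ => hxx p.1 p.2) (Set.univ ×ˢ Set.Icc 0 T))
    (chxxx : ContinuousOn (fun p : ℝ × ℝ => hxxx p.1 p.2) (Set.univ ×ˢ Set.Icc 0 T))
    (cht : ContinuousOn (fun p : ℝ × ℝ => ht p.1 p.2) (Set.univ ×ˢ Set.Icc 0 T))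
    (dhx : ∀ x : ℝ, ∀ t ∈ Set.Icc (0:ℝ) T, HasDerivAt (fun y => h y t) (hx x t) x)
    (dhxx : ∀ x : ℝ, ∀ t ∈ Set.Icc (0:ℝ) T, HasDerivAt (fun y => hx y t) (hxx x t) x)
    (dhxxx : ∀ x : ℝ, ∀ t ∈ Set.Icc (0:ℝ) T, HasDerivAt (fun y => hxx y t) (hxxx x t) x)
    (dht : ∀ x : ℝ, ∀ t ∈ Set.Icc (0:ℝ) T,
      HasDerivWithinAt (fun s => h x s) (ht x t) (Set.Icc 0 T) t)
    (pde : ∀ x : ℝ, ∀ t ∈ Set.Icc (0:ℝ) T,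
      HasDerivAt (fun y => S * (((h y t) ^ 3 + ε) * (hx y t + hxxx y t)))
        (-(ht x t) - 2 * (h x t)^2 * hx x t) x)
    (hpos : ∀ x : ℝ, ∀ t ∈ Set.Icc (0:ℝ) T, 0 ≤ h x t)
    (hbc : ∀ t ∈ Set.Icc (0:ℝ) T,
      a * (hx a t + hxxx a t + 2 / (3 * S)) + a * (hx (-a) t + hxxx (-a) t + 2 / (3 * S)) = 0) :
    ∀ t ∈ Set.Icc (0:ℝ) T,
      (1/2) * ((∫ x in (-a)..a, (hx x t)^2) - (∫ x in (-a)..a, (h x t)^2)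
          - (4/(3*S)) * ∫ x in (-a)..a, x * h x t)
        ≤ (1/2) * ((∫ x in (-a)..a, (hx x 0)^2) - (∫ x in (-a)..a, (h x 0)^2)
          - (4/(3*S)) * ∫ x in (-a)..a, x * h x 0)
      ∧ (∫ x in (-a)..a, h x t) = (∫ x in (-a)..a, h x 0) := by
  have h0T : (0:ℝ) ∈ Set.Icc (0:ℝ) T := Set.left_mem_Icc.2 (le_of_lt hT)
  have hle : -a ≤ a := by linarith
  have hS3 : (3:ℝ) * S ≠ 0 := by positivity
  -- periodicity of spatial derivatives
  have hx_per : ∀ x, ∀ t ∈ Set.Icc (0:ℝ) T, hx (x + 2*a) t = hx x t := by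
    intro x t htt
    have h1 : HasDerivAt (fun y => h (y + 2*a) t) (hx (x+2*a) t) x := by
      simpa [Function.comp_def] using (dhx (x+2*a) t htt).comp x ((hasDerivAt_id x).add_const (2*a))
    have h2 : (fun y => h (y+2*a) t) = fun y => h y t := funext fun y => per y t
    rw [h2] at h1
    exact h1.unique (dhx x t htt)
  have hxx_per : ∀ x, ∀ t ∈ Set.Icc (0:ℝ) T, hxx (x + 2*a) t = hxx x t := by
    intro x t htt
    have h1 : HasDerivAt (fun y => hx (y + 2*a) t) (hxx (x+2*a) t) x := by
      simpa [Function.comp_def] using (dhxx (x+2*a) t htt).comp x ((hasDerivAt_id x).add_const (2*a))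
    have h2 : (fun y => hx (y+2*a) t) = fun y => hx y t := funext fun y => hx_per y t htt
    rw [h2] at h1
    exact h1.unique (dhxx x t htt)
  have hxxx_per : ∀ x, ∀ t ∈ Set.Icc (0:ℝ) T, hxxx (x + 2*a) t = hxxx x t := by
    intro x t htt
    have h1 : HasDerivAt (fun y => hxx (y + 2*a) t) (hxxx (x+2*a) t) x := by
      simpa [Function.comp_def] using (dhxxx (x+2*a) t htt).comp x ((hasDerivAt_id x).add_const (2*a))
    have h2 : (fun y => hxx (y+2*a) t) = fun y => hxx y t := funext fun y => hxx_per y t htt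
    rw [h2] at h1
    exact h1.unique (dhxxx x t htt)
  -- the flux P and its spatial derivative -ht
  set wx : ℝ → ℝ → ℝ := fun x t => hx x t + hxxx x t + 2/(3*S) with hwx_def
  set P : ℝ → ℝ → ℝ := fun x t => S * ((h x t)^3 + ε) * wx x t with hP_def
  have dP : ∀ x : ℝ, ∀ t ∈ Set.Icc (0:ℝ) T, HasDerivAt (fun y => P y t) (-(ht x t)) x := by
    intro x t htt
    have d3 : HasDerivAt (fun y => (2/3) * ((h y t)^3 + ε))
        ((2/3) * ((3:ℕ) * (h x t)^2 * hx x t)) x := by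
      exact (((dhx x t htt).pow 3).add_const ε).const_mul (2/3)
    have dsum := (pde x t htt).add d3
    have hfun : (fun y => S * (((h y t) ^ 3 + ε) * (hx y t + hxxx y t))
        + (2/3) * ((h y t)^3 + ε)) = fun y => P y t := by
      funext y
      simp only [hP_def, hwx_def]
      field_simp
    simp only [Pi.add_def] at dsum
    rw [hfun] at dsum
    replace dsum : HasDerivAt (fun y => P y t) _ x := dsum
    convert dsum using 1
    push_cast
    ring
  have hP_per : ∀ x, ∀ t ∈ Set.Icc (0:ℝ) T, P (x + 2*a) t = P x t := by
    intro x t htt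
    simp only [hP_def, hwx_def, per x t, hx_per x t htt, hxxx_per x t htt]
  -- boundary values of P vanish
  have hwx_bd : ∀ t ∈ Set.Icc (0:ℝ) T, wx a t = 0 := by
    intro t htt
    have he1 : hx a t = hx (-a) t := by
      have := hx_per (-a) t htt
      rw [show -a + 2*a = a by ring] at this
      exact this
    have he2 : hxxx a t = hxxx (-a) t := by
      have := hxxx_per (-a) t htt
      rw [show -a + 2*a = a by ring] at this
      exact this
    have hb := hbc t htt
    rw [← he1, ← he2] at hb
    have : (2*a) * (hx a t + hxxx a t + 2/(3*S)) = 0 := by linarith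
    have h2a : (2*a) ≠ 0 := by positivity
    simp only [hwx_def]
    exact (mul_eq_zero.1 this).resolve_left h2a
  have hP_bd : ∀ t ∈ Set.Icc (0:ℝ) T, P a t = 0 ∧ P (-a) t = 0 := by
    intro t htt
    have h1 : P a t = 0 := by simp [hP_def, hwx_bd t htt]
    have h2 : P (-a) t = P a t := by
      have := hP_per (-a) t htt
      rw [show -a + 2*a = a by ring] at this
      exact this.symm
    exact ⟨h1, h2.trans h1⟩
  -- slice continuity helpers
  have sc_h : ∀ t ∈ Set.Icc (0:ℝ) T, Continuous (fun x => h x t) := fun t htt => cont_slice_x ch htt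
  have sc_hx : ∀ t ∈ Set.Icc (0:ℝ) T, Continuous (fun x => hx x t) := fun t htt => cont_slice_x chx htt
  have sc_hxx : ∀ t ∈ Set.Icc (0:ℝ) T, Continuous (fun x => hxx x t) := fun t htt => cont_slice_x chxx htt
  have sc_hxxx : ∀ t ∈ Set.Icc (0:ℝ) T, Continuous (fun x => hxxx x t) := fun t htt => cont_slice_x chxxx htt
  have sc_ht : ∀ t ∈ Set.Icc (0:ℝ) T, Continuous (fun x => ht x t) := fun t htt => cont_slice_x cht htt
  have sc_wx : ∀ t ∈ Set.Icc (0:ℝ) T, Continuous (fun x => wx x t) := by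
    intro t htt
    exact ((sc_hx t htt).add (sc_hxxx t htt)).add continuous_const
  -- dissipation inequality: 0 ≤ ∫ ht * w
  have hdiss : ∀ t ∈ Set.Icc (0:ℝ) T,
      0 ≤ ∫ x in (-a)..a, ht x t * (h x t + hxx x t + (2/(3*S))*x) := by
    intro t htt
    have dv : ∀ x : ℝ, HasDerivAt (fun y => h y t + hxx y t + (2/(3*S))*y) (wx x t) x := by
      intro x
      have : HasDerivAt (fun y : ℝ => (2/(3*S))*y) (2/(3*S)) x := by
        simpa using (hasDerivAt_id x).const_mul (2/(3*S))
      have hd := ((dhx x t htt).add (dhxxx x t htt)).add this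
      simpa [hwx_def, Pi.add_def] using hd
    have hibp := intervalIntegral.integral_mul_deriv_eq_deriv_mul
      (u := fun y => P y t) (v := fun y => h y t + hxx y t + (2/(3*S))*y)
      (u' := fun x => -(ht x t)) (v' := fun x => wx x t)
      (a := -a) (b := a)
      (fun x _ => dP x t htt) (fun x _ => dv x)
      (((sc_ht t htt).neg).intervalIntegrable _ _)
      ((sc_wx t htt).intervalIntegrable _ _)
    rw [(hP_bd t htt).1, (hP_bd t htt).2] at hibp
    have heq : ∫ x in (-a)..a, ht x t * (h x t + hxx x t + (2/(3*S))*x)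
        = ∫ x in (-a)..a, P x t * wx x t := by
      rw [hibp]
      rw [show (∫ x in (-a)..a, -ht x t * (h x t + hxx x t + 2 / (3 * S) * x))
          = -∫ x in (-a)..a, ht x t * (h x t + hxx x t + 2 / (3 * S) * x) by
        rw [← intervalIntegral.integral_neg]
        exact intervalIntegral.integral_congr (fun x _ => by ring)]
      ring
    rw [heq]
    apply intervalIntegral.integral_nonneg hle
    intro x _
    simp only [hP_def]
    have h1 : 0 ≤ (h x t)^3 + ε := by
      have := hpos x t htt
      positivity
    have : S * ((h x t)^3 + ε) * wx x t * wx x t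
        = S * ((h x t)^3 + ε) * (wx x t)^2 := by ring
    rw [this]
    positivity
  -- mass derivative vanishes
  have hm0 : ∀ t ∈ Set.Icc (0:ℝ) T, (∫ x in (-a)..a, ht x t) = 0 := by
    intro t htt
    have hd : ∀ x ∈ Set.uIcc (-a) a, HasDerivAt (fun y => -P y t) (ht x t) x := by
      intro x _
      simpa [Pi.neg_def] using (dP x t htt).neg
    have := intervalIntegral.integral_eq_sub_of_hasDerivAt hd
      ((sc_ht t htt).intervalIntegrable _ _)
    rw [this, (hP_bd t htt).1, (hP_bd t htt).2]
    ring
  -- define the integral quantities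
  set Gf : ℝ → ℝ := fun t => ∫ x in (-a)..a, (hx x t)^2 with hGf_def
  set I2f : ℝ → ℝ := fun t => ∫ x in (-a)..a, (h x t)^2 with hI2f_def
  set Xf : ℝ → ℝ := fun t => ∫ x in (-a)..a, x * h x t with hXf_def
  set mf : ℝ → ℝ := fun t => ∫ x in (-a)..a, h x t with hmf_def
  set Ef : ℝ → ℝ := fun t => (1/2) * (Gf t - I2f t - (4/(3*S)) * Xf t) with hEf_def
  -- derivative of Gf
  have hG' : ∀ t₀ ∈ Set.Ioo (0:ℝ) T,
      HasDerivAt Gf (∫ x in (-a)..a, ht x t₀ * (-(hxx x t₀ + hxx x t₀))) t₀ := by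
    intro t₀ ht₀
    have ht₀' : t₀ ∈ Set.Icc (0:ℝ) T := Set.mem_Icc_of_Ioo ht₀
    have hv_cont : ContinuousOn (fun p : ℝ × ℝ => -(hxx p.1 p.2 + hxx p.1 t₀))
        (Set.univ ×ˢ Set.Icc 0 T) := by
      have c2 : ContinuousOn (fun p : ℝ × ℝ => hxx p.1 t₀) (Set.univ ×ˢ Set.Icc 0 T) :=
        ((sc_hxx t₀ ht₀').comp continuous_fst).continuousOn
      exact (chxx.add c2).neg
    apply hasDerivAt_param_integral (v := fun x s => -(hxx x s + hxx x t₀)) ha hT ht₀ ch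
      (fun x _ t htt => dht x t htt) cht hv_cont
    intro s hss
    -- difference-quotient identity via integration by parts
    have e_h : ∀ τ ∈ Set.Icc (0:ℝ) T, h a τ = h (-a) τ := by
      intro τ _
      have := per (-a) τ
      rwa [show -a + 2*a = a by ring] at this
    have e_hx : ∀ τ ∈ Set.Icc (0:ℝ) T, hx a τ = hx (-a) τ := by
      intro τ hττ
      have := hx_per (-a) τ hττ
      rwa [show -a + 2*a = a by ring] at this
    have hibp := intervalIntegral.integral_mul_deriv_eq_deriv_mul
      (u := fun y => h y s - h y t₀) (v := fun y => hx y s + hx y t₀)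
      (u' := fun x => hx x s - hx x t₀) (v' := fun x => hxx x s + hxx x t₀)
      (a := -a) (b := a)
      (fun x _ => (dhx x s hss).sub (dhx x t₀ ht₀'))
      (fun x _ => (dhxx x s hss).add (dhxx x t₀ ht₀'))
      (((sc_hx s hss).sub (sc_hx t₀ ht₀')).intervalIntegrable _ _)
      (((sc_hxx s hss).add (sc_hxx t₀ ht₀')).intervalIntegrable _ _)
    rw [e_h s hss, e_h t₀ ht₀', e_hx s hss, e_hx t₀ ht₀'] at hibp
    have hsplit : Gf s - Gf t₀ = ∫ x in (-a)..a, ((hx x s)^2 - (hx x t₀)^2) := by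
      rw [intervalIntegral.integral_sub (f := fun x => hx x s ^ 2) (g := fun x => hx x t₀ ^ 2) (((sc_hx s hss).pow 2).intervalIntegrable _ _)
        (((sc_hx t₀ ht₀').pow 2).intervalIntegrable _ _)]
    have h1 : (∫ x in (-a)..a, ((hx x s)^2 - (hx x t₀)^2))
        = ∫ x in (-a)..a, (hx x s - hx x t₀) * (hx x s + hx x t₀) :=
      intervalIntegral.integral_congr (fun x _ => by ring)
    have h2 : (∫ x in (-a)..a, (h x s - h x t₀) * (-(hxx x s + hxx x t₀)))
        = -∫ x in (-a)..a, (h x s - h x t₀) * (hxx x s + hxx x t₀) := by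
      rw [← intervalIntegral.integral_neg]
      exact intervalIntegral.integral_congr (fun x _ => by ring)
    rw [hsplit, h1, h2]
    linarith [hibp]
  -- derivative of I2f
  have hI2' : ∀ t₀ ∈ Set.Ioo (0:ℝ) T,
      HasDerivAt I2f (∫ x in (-a)..a, ht x t₀ * (h x t₀ + h x t₀)) t₀ := by
    intro t₀ ht₀
    have ht₀' : t₀ ∈ Set.Icc (0:ℝ) T := Set.mem_Icc_of_Ioo ht₀
    have hv_cont : ContinuousOn (fun p : ℝ × ℝ => h p.1 p.2 + h p.1 t₀)
        (Set.univ ×ˢ Set.Icc 0 T) :=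
      ch.add ((sc_h t₀ ht₀').comp continuous_fst).continuousOn
    apply hasDerivAt_param_integral (v := fun x s => h x s + h x t₀) ha hT ht₀ ch
      (fun x _ t htt => dht x t htt) cht hv_cont
    intro s hss
    rw [show I2f s - I2f t₀ = ∫ x in (-a)..a, ((h x s)^2 - (h x t₀)^2) from by
      rw [intervalIntegral.integral_sub (f := fun x => h x s ^ 2) (g := fun x => h x t₀ ^ 2) (((sc_h s hss).pow 2).intervalIntegrable _ _)
        (((sc_h t₀ ht₀').pow 2).intervalIntegrable _ _)]]
    exact intervalIntegral.integral_congr (fun x _ => by ring)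
  -- derivative of Xf
  have hX' : ∀ t₀ ∈ Set.Ioo (0:ℝ) T,
      HasDerivAt Xf (∫ x in (-a)..a, ht x t₀ * x) t₀ := by
    intro t₀ ht₀
    have ht₀' : t₀ ∈ Set.Icc (0:ℝ) T := Set.mem_Icc_of_Ioo ht₀
    have hv_cont : ContinuousOn (fun p : ℝ × ℝ => p.1) (Set.univ ×ˢ Set.Icc (0:ℝ) T) :=
      continuous_fst.continuousOn
    apply hasDerivAt_param_integral (v := fun x _ => x) ha hT ht₀ ch
      (fun x _ t htt => dht x t htt) cht hv_cont
    intro s hss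
    rw [show Xf s - Xf t₀ = ∫ x in (-a)..a, (x * h x s - x * h x t₀) from by
      rw [intervalIntegral.integral_sub (f := fun x => x * h x s) (g := fun x => x * h x t₀)
        ((continuous_id.mul (sc_h s hss)).intervalIntegrable _ _)
        ((continuous_id.mul (sc_h t₀ ht₀')).intervalIntegrable _ _)]]
    exact intervalIntegral.integral_congr (fun x _ => by ring)
  -- derivative of mf
  have hm' : ∀ t₀ ∈ Set.Ioo (0:ℝ) T,
      HasDerivAt mf (∫ x in (-a)..a, ht x t₀ * 1) t₀ := by
    intro t₀ ht₀
    have ht₀' : t₀ ∈ Set.Icc (0:ℝ) T := Set.mem_Icc_of_Ioo ht₀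
    have hv_cont : ContinuousOn (fun _ : ℝ × ℝ => (1:ℝ)) (Set.univ ×ˢ Set.Icc (0:ℝ) T) :=
      continuous_const.continuousOn
    apply hasDerivAt_param_integral (v := fun _ _ => (1:ℝ)) ha hT ht₀ ch
      (fun x _ t htt => dht x t htt) cht hv_cont
    intro s hss
    rw [show mf s - mf t₀ = ∫ x in (-a)..a, (h x s - h x t₀) from by
      rw [intervalIntegral.integral_sub ((sc_h s hss).intervalIntegrable _ _)
        ((sc_h t₀ ht₀').intervalIntegrable _ _)]]
    exact intervalIntegral.integral_congr (fun x _ => by ring)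
  -- derivative of Ef
  have hE' : ∀ t₀ ∈ Set.Ioo (0:ℝ) T,
      HasDerivAt Ef (-(∫ x in (-a)..a, ht x t₀ * (h x t₀ + hxx x t₀ + (2/(3*S))*x))) t₀ := by
    intro t₀ ht₀
    have ht₀' : t₀ ∈ Set.Icc (0:ℝ) T := Set.mem_Icc_of_Ioo ht₀
    have d := (((hG' t₀ ht₀).sub (hI2' t₀ ht₀)).sub
      ((hX' t₀ ht₀).const_mul (4/(3*S)))).const_mul (1/2)
    replace d : HasDerivAt Ef _ t₀ := d
    convert d using 1
    have i1 : IntervalIntegrable (fun x => ht x t₀ * (-(hxx x t₀ + hxx x t₀))) volume (-a) a :=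
      ((sc_ht t₀ ht₀').mul (((sc_hxx t₀ ht₀').add (sc_hxx t₀ ht₀')).neg)).intervalIntegrable _ _
    have i2 : IntervalIntegrable (fun x => ht x t₀ * (h x t₀ + h x t₀)) volume (-a) a :=
      ((sc_ht t₀ ht₀').mul ((sc_h t₀ ht₀').add (sc_h t₀ ht₀'))).intervalIntegrable _ _
    have i3 : IntervalIntegrable (fun x => (4/(3*S)) * (ht x t₀ * x)) volume (-a) a :=
      (continuous_const.mul ((sc_ht t₀ ht₀').mul continuous_id)).intervalIntegrable _ _
    rw [← intervalIntegral.integral_const_mul ((4:ℝ)/(3*S)) (fun x => ht x t₀ * x)]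
    rw [← intervalIntegral.integral_sub i1 i2]
    rw [← intervalIntegral.integral_sub (i1.sub i2) i3]
    rw [← intervalIntegral.integral_const_mul ((1:ℝ)/2)]
    rw [← intervalIntegral.integral_neg]
    exact intervalIntegral.integral_congr (fun x _ => by ring)
  -- continuity of the quantities on [0,T]
  have cG : ContinuousOn Gf (Set.Icc (0:ℝ) T) :=
    continuousOn_param_integral ha (chx.pow 2)
  have cI2 : ContinuousOn I2f (Set.Icc (0:ℝ) T) :=
    continuousOn_param_integral ha (ch.pow 2)
  have cX : ContinuousOn Xf (Set.Icc (0:ℝ) T) :=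
    continuousOn_param_integral ha (continuous_fst.continuousOn.mul ch)
  have cm : ContinuousOn mf (Set.Icc (0:ℝ) T) :=
    continuousOn_param_integral ha ch
  have cE : ContinuousOn Ef (Set.Icc (0:ℝ) T) :=
    (((cG.sub cI2).sub (cX.const_smul (4/(3*S)))).const_smul ((1:ℝ)/2))
  -- energy is antitone
  have hEanti : AntitoneOn Ef (Set.Icc (0:ℝ) T) := by
    apply antitoneOn_of_deriv_nonpos (convex_Icc 0 T) cE
    · intro t htI
      rw [interior_Icc] at htI
      exact (hE' t htI).differentiableAt.differentiableWithinAt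
    · intro t htI
      rw [interior_Icc] at htI
      rw [(hE' t htI).deriv]
      exact neg_nonpos.2 (hdiss t (Set.mem_Icc_of_Ioo htI))
  -- mass is constant
  have hmd0 : ∀ t ∈ Set.Ioo (0:ℝ) T, HasDerivAt mf 0 t := by
    intro t htI
    have := hm' t htI
    rw [show (∫ x in (-a)..a, ht x t * 1) = ∫ x in (-a)..a, ht x t from
      intervalIntegral.integral_congr (fun x _ => by ring)] at this
    rwa [hm0 t (Set.mem_Icc_of_Ioo htI)] at this
  have hmanti : AntitoneOn mf (Set.Icc (0:ℝ) T) := by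
    apply antitoneOn_of_deriv_nonpos (convex_Icc 0 T) cm
    · intro t htI
      rw [interior_Icc] at htI
      exact (hmd0 t htI).differentiableAt.differentiableWithinAt
    · intro t htI
      rw [interior_Icc] at htI
      rw [(hmd0 t htI).deriv]
  have hmmono : MonotoneOn mf (Set.Icc (0:ℝ) T) := by
    apply monotoneOn_of_deriv_nonneg (convex_Icc 0 T) cm
    · intro t htI
      rw [interior_Icc] at htI
      exact (hmd0 t htI).differentiableAt.differentiableWithinAt
    · intro t htI
      rw [interior_Icc] at htI
      rw [(hmd0 t htI).deriv]
  -- conclusion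
  intro t htt
  constructor
  · exact hEanti h0T htt htt.1
  · exact le_antisymm (hmanti h0T htt htt.1) (hmmono h0T htt htt.1)

/-- Global-in-time uniform `H¹` bound for regularized Model II on a domain with
`a < π/2`: there is `A* > 0` depending only on `a`, `S`, the initial energy `𝓔̃(h(·,0))`
and the mass `M`, bounding `∫ h_x²` and `∫ h²` uniformly in `t`, `T`, and `ε`. -/
theorem modelII_global_estimate
    (a S E0 M : ℝ) (ha : 0 < a) (ha2 : a < Real.pi / 2) (hS : 0 < S) :
    ∃ Astar : ℝ, 0 < Astar ∧
      ∀ ε T : ℝ, 0 < ε → 0 < T →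
      ∀ h hx hxx hxxx hxxxx ht : ℝ → ℝ → ℝ,
        ClassicalSolutionII a S ε T h hx hxx hxxx hxxxx ht →
        (∀ x : ℝ, ∀ t ∈ Set.Icc (0:ℝ) T, 0 ≤ h x t) →
        (∀ t ∈ Set.Icc (0:ℝ) T,
          a * (hx a t + hxxx a t + 2 / (3 * S))
            + a * (hx (-a) t + hxxx (-a) t + 2 / (3 * S)) = 0) →
        (1/2) * (∫ x in (-a)..a,
            ((hx x 0)^2 - (h x 0)^2 - (4 / (3 * S)) * x * h x 0)) = E0 →
        (∫ x in (-a)..a, h x 0) = M →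
        ∀ t ∈ Set.Icc (0:ℝ) T,
          (∫ x in (-a)..a, (hx x t)^2) ≤ Astar ∧
          (∫ x in (-a)..a, (h x t)^2) ≤ (2 * a / Real.pi)^2 * Astar + M^2 / (2 * a) := by
  have hπ := Real.pi_pos
  set c : ℝ := (2 * a / Real.pi)^2 with hc_def
  have hc0 : 0 ≤ c := sq_nonneg _
  have hc1 : c < 1 := by
    have h1 : 2 * a / Real.pi < 1 := by
      rw [div_lt_one hπ]; linarith
    have h2 : 0 < 2 * a / Real.pi := by positivity
    calc c = (2*a/Real.pi)*(2*a/Real.pi) := sq (2*a/Real.pi) ▸ by ring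
      _ < 1*1 := by nlinarith
      _ = 1 := by ring
  set K : ℝ := 2*E0 + M^2/(2*a) + (4/(3*S))*(a*M) with hK_def
  set Astar : ℝ := max (K/(1-c)) 1 with hA_def
  refine ⟨Astar, lt_of_lt_of_le one_pos (le_max_right _ _), ?_⟩
  intro ε T hε hT h hx hxx hxxx hxxxx ht sol hpos hbc hE0 hM t htt
  have h0T : (0:ℝ) ∈ Set.Icc (0:ℝ) T := Set.left_mem_Icc.2 (le_of_lt hT)
  have hle : -a ≤ a := by linarith
  obtain ⟨per, ch, chx, chxx, chxxx, chxxxx, cht, dhx, dhxx, dhxxx, dhxxxx, dht, pde⟩ := sol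
  have core := modelII_core a S ε T h hx hxx hxxx ht ha hT hS hε per ch chx chxx chxxx cht
    dhx dhxx dhxxx dht pde hpos hbc
  obtain ⟨hEt, hmt⟩ := core t htt
  -- slice continuity
  have sc_h : ∀ τ ∈ Set.Icc (0:ℝ) T, Continuous (fun x => h x τ) := fun τ hτ => cont_slice_x ch hτ
  have sc_hx : ∀ τ ∈ Set.Icc (0:ℝ) T, Continuous (fun x => hx x τ) := fun τ hτ => cont_slice_x chx hτ
  -- mass at time t equals M
  have hmass : (∫ x in (-a)..a, h x t) = M := hmt.trans hM
  -- M ≥ 0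
  have hM0 : 0 ≤ M := by
    rw [← hM]
    apply intervalIntegral.integral_nonneg hle
    exact fun x _ => hpos x 0 h0T
  -- initial energy identity
  have hE0' : (1/2) * ((∫ x in (-a)..a, (hx x 0)^2) - (∫ x in (-a)..a, (h x 0)^2)
      - (4/(3*S)) * ∫ x in (-a)..a, x * h x 0) = E0 := by
    rw [← hE0]
    congr 1
    have i1 : IntervalIntegrable (fun x => (hx x 0)^2) volume (-a) a :=
      ((sc_hx 0 h0T).pow 2).intervalIntegrable _ _
    have i2 : IntervalIntegrable (fun x => (h x 0)^2) volume (-a) a :=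
      ((sc_h 0 h0T).pow 2).intervalIntegrable _ _
    have i3 : IntervalIntegrable (fun x => (4/(3*S)) * x * h x 0) volume (-a) a :=
      ((continuous_const.mul continuous_id).mul (sc_h 0 h0T)).intervalIntegrable _ _
    rw [intervalIntegral.integral_sub (i1.sub i2) i3, intervalIntegral.integral_sub i1 i2]
    congr 1
    rw [show (∫ x in (-a)..a, (4/(3*S)) * x * h x 0)
        = ∫ x in (-a)..a, (4/(3*S)) * (x * h x 0) from
      intervalIntegral.integral_congr (fun x _ => by ring)]
    rw [intervalIntegral.integral_const_mul]
  rw [hE0'] at hEt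
  -- Poincaré at time t
  have hPoin := poincare_mean ha (fun x => h x t) (fun x => hx x t) M
    (fun x => dhx x t htt) (sc_hx t htt) (fun x => per x t) hmass
  -- bound on ∫ x h
  have hX : (∫ x in (-a)..a, x * h x t) ≤ a * M := by
    rw [← hmass, ← intervalIntegral.integral_const_mul]
    apply intervalIntegral.integral_mono_on hle
      ((continuous_id.mul (sc_h t htt)).intervalIntegrable _ _)
      ((continuous_const.mul (sc_h t htt)).intervalIntegrable _ _)
    intro x hxm
    exact mul_le_mul_of_nonneg_right hxm.2 (hpos x t htt)
  -- nonnegativity of Dirichlet integral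
  have hD0 : 0 ≤ ∫ x in (-a)..a, (hx x t)^2 :=
    intervalIntegral.integral_nonneg hle (fun x _ => sq_nonneg _)
  -- put it together
  have h43 : (0:ℝ) ≤ 4/(3*S) := by positivity
  have hXq := mul_le_mul_of_nonneg_left hX h43
  set D : ℝ := ∫ x in (-a)..a, (hx x t)^2 with hD_def
  set I2 : ℝ := ∫ x in (-a)..a, (h x t)^2 with hI2_def
  set XT : ℝ := ∫ x in (-a)..a, x * h x t with hXT_def
  set q : ℝ := 4/(3*S) with hq_def
  have hP' : I2 ≤ c * D + M^2/(2*a) := hPoin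
  have hDK : D * (1 - c) ≤ K := by
    rw [hK_def]
    nlinarith [hXq, hP', hEt]
  have hDA : D ≤ Astar := by
    have h1c : 0 < 1 - c := by linarith
    have : D ≤ K/(1-c) := by
      rw [le_div_iff₀ h1c]; exact hDK
    exact this.trans (le_max_left _ _)
  refine ⟨hDA, ?_⟩
  calc I2 ≤ c * D + M^2/(2*a) := hP'
    _ ≤ c * Astar + M^2/(2*a) := by nlinarith
    _ = (2*a/Real.pi)^2 * Astar + M^2/(2*a) := by rw [hc_def]
end
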